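/- arXiv:1504.06096 — 5 statements merged into one kernel-verified Lean document; each statement's English description precedes it below -/
import Mathlib

section
/- The SCM lower bound is a true lower bound: for every μ, λ_LB(μ;C_J) := min_{y ∈ 𝒴_LB(C_J)} θ(μ)ᵀ y ≤ λ_min(A(μ)), where 𝒴_LB(C_J) = {y ∈ ℬ : θ(μᵢ)ᵀ y ≥ λ_min(A(μᵢ)), i=1,...,J}. -/
open Matrix

/-- Smallest eigenvalue of a (Hermitian) matrix. -/
noncomputable def lamMin {n : ℕ} {𝕜 : Type*} [RCLike 𝕜] (A : Matrix (Fin n) (Fin n) 𝕜) : ℝ :=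
  if h : A.IsHermitian then ⨅ i, h.eigenvalues i else 0

/-- Largest eigenvalue of a (Hermitian) matrix. -/
noncomputable def lamMax {n : ℕ} {𝕜 : Type*} [RCLike 𝕜] (A : Matrix (Fin n) (Fin n) 𝕜) : ℝ :=
  if h : A.IsHermitian then ⨆ i, h.eigenvalues i else 0

/-- Rayleigh quotient u*Au/(u*u). -/
noncomputable def RQ {n : ℕ} (A : Matrix (Fin n) (Fin n) ℂ) (u : Fin n → ℂ) : ℝ :=
  (star u ⬝ᵥ A *ᵥ u).re / (star u ⬝ᵥ u).re

/-- Spectral decomposition of the quadratic form of a Hermitian matrix. -/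
lemma scm_quadform_eq {n : ℕ} {B : Matrix (Fin n) (Fin n) ℂ} (hB : B.IsHermitian)
    (v : Fin n → ℂ) :
    (star v ⬝ᵥ B *ᵥ v).re
      = ∑ i, hB.eigenvalues i *
          Complex.normSq ((star (hB.eigenvectorUnitary : Matrix (Fin n) (Fin n) ℂ) *ᵥ v) i) ∧
    (star v ⬝ᵥ v).re
      = ∑ i, Complex.normSq
          ((star (hB.eigenvectorUnitary : Matrix (Fin n) (Fin n) ℂ) *ᵥ v) i) := by
  classical
  set U : Matrix (Fin n) (Fin n) ℂ := (hB.eigenvectorUnitary : Matrix (Fin n) (Fin n) ℂ) with hU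
  set w : Fin n → ℂ := star U *ᵥ v with hw
  have hsw : star w = star v ᵥ* U := by
    rw [hw, star_mulVec]; simp [star_eq_conjTranspose]
  have h1 : star v ⬝ᵥ B *ᵥ v = star w ⬝ᵥ (diagonal (RCLike.ofReal ∘ hB.eigenvalues) *ᵥ w) := by
    conv_lhs => rw [hB.spectral_theorem, Unitary.conjStarAlgAut_apply]
    rw [← hU, ← mulVec_mulVec, ← mulVec_mulVec, dotProduct_mulVec, ← hsw, ← hw]
  have hUU : U * star U = 1 := mem_unitaryGroup_iff.mp hB.eigenvectorUnitary.2
  have h2 : star w ⬝ᵥ w = star v ⬝ᵥ v := by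
    rw [hsw, hw, ← dotProduct_mulVec, mulVec_mulVec, hUU, one_mulVec]
  constructor
  · rw [h1]
    simp only [dotProduct, mulVec_diagonal, Function.comp_apply, Complex.re_sum]
    refine Finset.sum_congr rfl fun i _ => ?_
    simp [Complex.mul_re, Complex.normSq_apply, RCLike.ofReal]
    ring
  · rw [← h2]
    simp only [dotProduct, Complex.re_sum]
    refine Finset.sum_congr rfl fun i _ => ?_
    simp [Complex.mul_re, Complex.normSq_apply]

/-- Rayleigh bounds for a unit vector. -/
lemma scm_quadform_bounds {n : ℕ} [Nonempty (Fin n)] {B : Matrix (Fin n) (Fin n) ℂ}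
    (hB : B.IsHermitian) (v : Fin n → ℂ) (hv : (star v ⬝ᵥ v).re = 1) :
    (⨅ i, hB.eigenvalues i) ≤ (star v ⬝ᵥ B *ᵥ v).re ∧
      (star v ⬝ᵥ B *ᵥ v).re ≤ ⨆ i, hB.eigenvalues i := by
  obtain ⟨he, hn⟩ := scm_quadform_eq hB v
  rw [hv] at hn
  set w := (star (hB.eigenvectorUnitary : Matrix (Fin n) (Fin n) ℂ) *ᵥ v)
  constructor
  · rw [he]
    calc ⨅ i, hB.eigenvalues i
        = ∑ i, (⨅ j, hB.eigenvalues j) * Complex.normSq (w i) := by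
          rw [← Finset.mul_sum, ← hn, mul_one]
      _ ≤ ∑ i, hB.eigenvalues i * Complex.normSq (w i) :=
          Finset.sum_le_sum fun i _ => mul_le_mul_of_nonneg_right
            (ciInf_le (Set.finite_range _).bddBelow i) (Complex.normSq_nonneg _)
  · rw [he]
    calc ∑ i, hB.eigenvalues i * Complex.normSq (w i)
        ≤ ∑ i, (⨆ j, hB.eigenvalues j) * Complex.normSq (w i) :=
          Finset.sum_le_sum fun i _ => mul_le_mul_of_nonneg_right
            (le_ciSup (Set.finite_range _).bddAbove i) (Complex.normSq_nonneg _)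
      _ = ⨆ i, hB.eigenvalues i := by rw [← Finset.mul_sum, ← hn, mul_one]

/-- Linearity of the quadratic form in the matrix. -/
lemma scm_dot_sum_smul {N Q : ℕ} (A : Fin Q → Matrix (Fin N) (Fin N) ℂ) (c : Fin Q → ℝ)
    (v : Fin N → ℂ) :
    ∑ q, c q * (star v ⬝ᵥ A q *ᵥ v).re = (star v ⬝ᵥ (∑ q, (c q : ℂ) • A q) *ᵥ v).re := by
  let φ : Matrix (Fin N) (Fin N) ℂ →+ ℂ :=
    { toFun := fun M => star v ⬝ᵥ M *ᵥ v
      map_zero' := by simp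
      map_add' := fun M M' => by simp [add_mulVec, dotProduct_add] }
  have hs : star v ⬝ᵥ (∑ q, (c q : ℂ) • A q) *ᵥ v = ∑ q, (c q : ℂ) * (star v ⬝ᵥ A q *ᵥ v) := by
    have := map_sum φ (fun q => (c q : ℂ) • A q) Finset.univ
    simp only [φ, AddMonoidHom.coe_mk, ZeroHom.coe_mk] at this
    rw [this]
    exact Finset.sum_congr rfl fun q _ => by
      rw [smul_mulVec, dotProduct_smul, smul_eq_mul]
  rw [hs, Complex.re_sum]
  exact Finset.sum_congr rfl fun q _ => (Complex.re_ofReal_mul _ _).symm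

/-- the SCM lower bound `λ_LB(μ; C_J) = inf { θ(μ)ᵀ y : y ∈ 𝒴_LB(C_J) }`
is a true lower bound for `λ_min(A(μ))`. -/
theorem scm_lower_bound_is_lower_bound
    {N Q P J : ℕ} (A : Fin Q → Matrix (Fin N) (Fin N) ℂ)
    (hA : ∀ q, (A q).IsHermitian) (θ : Fin Q → (Fin P → ℝ) → ℝ)
    (μs : Fin J → (Fin P → ℝ)) (μ : Fin P → ℝ)
    (hHerm : ∀ ν : Fin P → ℝ, (∑ q, (θ q ν : ℂ) • A q).IsHermitian)
    (hN : 0 < N) :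
    sInf {r : ℝ | ∃ y : Fin Q → ℝ,
        (∀ q, lamMin (A q) ≤ y q ∧ y q ≤ lamMax (A q)) ∧
        (∀ i : Fin J, ∑ q, θ q (μs i) * y q ≥ lamMin (∑ q, (θ q (μs i) : ℂ) • A q)) ∧
        r = ∑ q, θ q μ * y q}
      ≤ lamMin (∑ q, (θ q μ : ℂ) • A q) := by
  haveI : Nonempty (Fin N) := ⟨⟨0, hN⟩⟩
  classical
  obtain ⟨i0, hi0⟩ := Finite.exists_min fun i => (hHerm μ).eigenvalues i
  set v : Fin N → ℂ := ⇑((hHerm μ).eigenvectorBasis i0) with hv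
  have hvv : (star v ⬝ᵥ v).re = 1 := by
    have h1 : star v ⬝ᵥ v = (inner ℂ ((hHerm μ).eigenvectorBasis i0)
        ((hHerm μ).eigenvectorBasis i0) : ℂ) := by
      rw [EuclideanSpace.inner_eq_star_dotProduct, dotProduct_comm]
    rw [h1, inner_self_eq_norm_sq_to_K]
    simp [(hHerm μ).eigenvectorBasis.orthonormal.1 i0]
  set y : Fin Q → ℝ := fun q => (star v ⬝ᵥ A q *ᵥ v).re with hy
  have lin : ∀ ν : Fin P → ℝ,
      ∑ q, θ q ν * y q = (star v ⬝ᵥ (∑ q, (θ q ν : ℂ) • A q) *ᵥ v).re := fun ν =>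
    scm_dot_sum_smul A (fun q => θ q ν) v
  have hminB : lamMin (∑ q, (θ q μ : ℂ) • A q) = (hHerm μ).eigenvalues i0 := by
    rw [lamMin, dif_pos (hHerm μ)]
    exact le_antisymm (ciInf_le (Set.finite_range _).bddBelow i0) (le_ciInf hi0)
  have hval : ∑ q, θ q μ * y q = lamMin (∑ q, (θ q μ : ℂ) • A q) := by
    rw [lin μ, hminB]
    have := (hHerm μ).eigenvalues_eq i0
    rw [this]; rfl
  have hmem : lamMin (∑ q, (θ q μ : ℂ) • A q) ∈ {r : ℝ | ∃ y : Fin Q → ℝ,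
        (∀ q, lamMin (A q) ≤ y q ∧ y q ≤ lamMax (A q)) ∧
        (∀ i : Fin J, ∑ q, θ q (μs i) * y q ≥ lamMin (∑ q, (θ q (μs i) : ℂ) • A q)) ∧
        r = ∑ q, θ q μ * y q} := by
    refine ⟨y, fun q => ?_, fun i => ?_, hval.symm⟩
    · have h := scm_quadform_bounds (hA q) v hvv
      rw [lamMin, dif_pos (hA q), lamMax, dif_pos (hA q)]
      exact h
    · rw [lin (μs i), lamMin, dif_pos (hHerm (μs i))]
      exact (scm_quadform_bounds (hHerm (μs i)) v hvv).1
  have hbdd : BddBelow {r : ℝ | ∃ y : Fin Q → ℝ,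
        (∀ q, lamMin (A q) ≤ y q ∧ y q ≤ lamMax (A q)) ∧
        (∀ i : Fin J, ∑ q, θ q (μs i) * y q ≥ lamMin (∑ q, (θ q (μs i) : ℂ) • A q)) ∧
        r = ∑ q, θ q μ * y q} := by
    refine ⟨∑ q, -(|θ q μ| * max |lamMin (A q)| |lamMax (A q)|), ?_⟩
    rintro r ⟨z, hz, -, rfl⟩
    refine Finset.sum_le_sum fun q _ => ?_
    have hzq : |z q| ≤ max |lamMin (A q)| |lamMax (A q)| := by
      rw [abs_le]
      constructor
      · calc -(max |lamMin (A q)| |lamMax (A q)|) ≤ -|lamMin (A q)| := by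
              simp [le_max_left]
          _ ≤ lamMin (A q) := neg_abs_le _
          _ ≤ z q := (hz q).1
      · exact (hz q).2.trans ((le_abs_self _).trans (le_max_right _ _))
    calc -(|θ q μ| * max |lamMin (A q)| |lamMax (A q)|)
        ≤ -|θ q μ * z q| := by
          rw [neg_le_neg_iff, abs_mul]
          exact mul_le_mul_of_nonneg_left hzq (abs_nonneg _)
      _ ≤ θ q μ * z q := neg_abs_le _
  exact csInf_le hbdd hmem
end

section
/- (Hermite interpolation of upper bound) Let μᵢ ∈ C_J be an interior point of D, suppose θ₁,...,θ_Q are differentiable at μᵢ, and suppose λᵢ = λ_min(A(μᵢ)) is a simple eigenvalue. Then the SCM upper bound λ_UB(μ;C_J) = min_{y ∈ {R(v₁),...,R(v_J)}} θ(μ)ᵀ y satisfies ∇λ_UB(μᵢ;C_J) = ∇λ_min(A(μᵢ)); i.e., both the value and the gradient of the upper bound coincide with those of the smallest eigenvalue at μᵢ. -/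
set_option maxHeartbeats 1000000

open Matrix

section AuxiliaryLemmas

open Complex Asymptotics Filter

variable {N : ℕ}

lemma qform_coord (U M : Matrix (Fin N) (Fin N) ℂ) (hU : U ∈ Matrix.unitaryGroup (Fin N) ℂ)
    (w : Fin N → ℂ) :
    star (star U *ᵥ w) ⬝ᵥ (star U * M * U) *ᵥ (star U *ᵥ w) = star w ⬝ᵥ M *ᵥ w := by
  have hUU : U * star U = 1 := (Matrix.mem_unitaryGroup_iff).mp hU
  rw [star_mulVec, show (star U)ᴴ = U by simp [Matrix.star_eq_conjTranspose],
    mulVec_mulVec, dotProduct_mulVec, vecMul_vecMul, dotProduct_mulVec (star w) M]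
  have : U * (star U * M * U * star U) = M :=
    calc U * (star U * M * U * star U) = (U * star U) * M * (U * star U) := by
          simp only [Matrix.mul_assoc]
        _ = M := by rw [hUU, Matrix.one_mul, Matrix.mul_one]
  rw [this]

lemma coord_mulVec (U : Matrix (Fin N) (Fin N) ℂ) (hU : U ∈ Matrix.unitaryGroup (Fin N) ℂ)
    (w : Fin N → ℂ) : U *ᵥ (star U *ᵥ w) = w := by
  rw [mulVec_mulVec, (Matrix.mem_unitaryGroup_iff).mp hU, one_mulVec]

lemma dot_self_re (c : Fin N → ℂ) : (star c ⬝ᵥ c).re = ∑ j, normSq (c j) := by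
  rw [dotProduct, Complex.re_sum]
  refine Finset.sum_congr rfl fun j _ => ?_
  simp [Pi.star_apply, RCLike.star_def, Complex.normSq_apply]

lemma qform_diag_re (d : Fin N → ℝ) (c : Fin N → ℂ) :
    (star c ⬝ᵥ (diagonal (fun j => (d j : ℂ))) *ᵥ c).re = ∑ j, d j * normSq (c j) := by
  rw [dotProduct, Complex.re_sum]
  refine Finset.sum_congr rfl fun j _ => ?_
  rw [mulVec_diagonal]
  simp only [Pi.star_apply, RCLike.star_def]
  rw [show (starRingEnd ℂ) (c j) * ((d j : ℂ) * c j) = (d j : ℂ) * ((starRingEnd ℂ) (c j) * c j) by ring,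
    ← Complex.normSq_eq_conj_mul_self]
  simp [← Complex.ofReal_mul]

section Herm
variable {M : Matrix (Fin N) (Fin N) ℂ} (hM : M.IsHermitian)

/-- coordinates of w in the eigenbasis of M -/
noncomputable def Ucoord (hM : M.IsHermitian) (w : Fin N → ℂ) : Fin N → ℂ :=
  star (hM.eigenvectorUnitary : Matrix (Fin N) (Fin N) ℂ) *ᵥ w

lemma diag_eq : (star (hM.eigenvectorUnitary : Matrix (Fin N) (Fin N) ℂ)) * M *
    (hM.eigenvectorUnitary : Matrix (Fin N) (Fin N) ℂ)
    = diagonal (fun j => (hM.eigenvalues j : ℂ)) := by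
  have h := hM.conjStarAlgAut_star_eigenvectorUnitary
  rw [Unitary.conjStarAlgAut_star_apply] at h
  exact h

lemma qform_eigen_re (w : Fin N → ℂ) :
    (star w ⬝ᵥ M *ᵥ w).re = ∑ j, hM.eigenvalues j * normSq (Ucoord hM w j) := by
  have h := qform_coord (hM.eigenvectorUnitary : Matrix (Fin N) (Fin N) ℂ) M
    hM.eigenvectorUnitary.2 w
  rw [diag_eq hM] at h
  rw [← h, ← qform_diag_re]
  rfl

lemma dot_eigen_re (w : Fin N → ℂ) :
    (star w ⬝ᵥ w).re = ∑ j, normSq (Ucoord hM w j) := by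
  have h := qform_coord (hM.eigenvectorUnitary : Matrix (Fin N) (Fin N) ℂ) 1
    hM.eigenvectorUnitary.2 w
  rw [Matrix.mul_one, (Matrix.mem_unitaryGroup_iff').mp hM.eigenvectorUnitary.2,
    one_mulVec, one_mulVec] at h
  rw [← h, ← dot_self_re]
  rfl

lemma eigen_coord {w : Fin N → ℂ} {μ : ℝ} (hw : M *ᵥ w = (μ : ℂ) • w)
    {j : Fin N} (hj : hM.eigenvalues j ≠ μ) : Ucoord hM w j = 0 := by
  set U : Matrix (Fin N) (Fin N) ℂ := (hM.eigenvectorUnitary : Matrix (Fin N) (Fin N) ℂ) with hU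
  have hUU : U * star U = 1 := (Matrix.mem_unitaryGroup_iff).mp hM.eigenvectorUnitary.2
  have hmat : diagonal (fun j => (hM.eigenvalues j : ℂ)) * star U = star U * M := by
    calc diagonal (fun j => (hM.eigenvalues j : ℂ)) * star U = (star U * M * U) * star U := by
          rw [diag_eq hM]
      _ = star U * M * (U * star U) := by simp only [Matrix.mul_assoc]
      _ = star U * M := by rw [hUU, Matrix.mul_one]
  have key : diagonal (fun j => (hM.eigenvalues j : ℂ)) *ᵥ Ucoord hM w = (μ : ℂ) • Ucoord hM w := by
    rw [Ucoord, mulVec_mulVec, hmat, ← mulVec_mulVec, hw, mulVec_smul]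
  have hcomp := congrFun key j
  rw [mulVec_diagonal] at hcomp
  simp only [Pi.smul_apply, smul_eq_mul] at hcomp
  have hfac : ((hM.eigenvalues j : ℂ) - (μ : ℂ)) * Ucoord hM w j = 0 := by
    rw [sub_mul, hcomp, sub_self]
  rcases mul_eq_zero.mp hfac with h | h
  · exact absurd (by exact_mod_cast sub_eq_zero.mp h) hj
  · exact h

lemma Ucoord_ne_zero {w : Fin N → ℂ} (hw : w ≠ 0) : Ucoord hM w ≠ 0 := by
  intro h
  apply hw
  have := congrArg (fun c => (hM.eigenvectorUnitary : Matrix (Fin N) (Fin N) ℂ) *ᵥ c) h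
  simpa [Ucoord, mulVec_mulVec, (Matrix.mem_unitaryGroup_iff).mp hM.eigenvectorUnitary.2,
    one_mulVec] using this

end Herm

lemma lamMin_eq {M : Matrix (Fin N) (Fin N) ℂ} (hM : M.IsHermitian) :
    lamMin M = ⨅ j, hM.eigenvalues j := by rw [lamMin, dif_pos hM]

lemma lamMin_le {M : Matrix (Fin N) (Fin N) ℂ} (hM : M.IsHermitian) (j : Fin N) :
    lamMin M ≤ hM.eigenvalues j := by
  rw [lamMin_eq hM]
  exact ciInf_le (Set.finite_range _).bddBelow j

lemma exists_lamMin {M : Matrix (Fin N) (Fin N) ℂ} (hM : M.IsHermitian) (hN : 0 < N) :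
    ∃ j, hM.eigenvalues j = lamMin M := by
  have : Nonempty (Fin N) := ⟨⟨0, hN⟩⟩
  obtain ⟨j, -, hj⟩ := Finset.exists_min_image Finset.univ hM.eigenvalues ⟨this.some, Finset.mem_univ _⟩
  refine ⟨j, le_antisymm ?_ (lamMin_le hM j)⟩
  rw [lamMin_eq hM]
  exact le_ciInf fun k => hj k (Finset.mem_univ k)

-- new material
lemma dot_self_pos {w : Fin N → ℂ} (hw : w ≠ 0) : 0 < (star w ⬝ᵥ w).re := by
  rw [dot_self_re]
  obtain ⟨i, hi⟩ := Function.ne_iff.mp hw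
  exact Finset.sum_pos' (fun j _ => normSq_nonneg _)
    ⟨i, Finset.mem_univ i, by simpa [normSq_pos] using hi⟩

lemma lamMin_le_RQ {M : Matrix (Fin N) (Fin N) ℂ} (hM : M.IsHermitian) {w : Fin N → ℂ}
    (hw : w ≠ 0) : lamMin M ≤ RQ M w := by
  rw [RQ, le_div_iff₀ (dot_self_pos hw), qform_eigen_re hM, dot_eigen_re hM, Finset.mul_sum]
  exact Finset.sum_le_sum fun j _ =>
    mul_le_mul_of_nonneg_right (lamMin_le hM j) (normSq_nonneg _)

lemma exists_unit_qform_eq_lamMin {M : Matrix (Fin N) (Fin N) ℂ} (hM : M.IsHermitian)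
    (hN : 0 < N) : ∃ w : Fin N → ℂ, (star w ⬝ᵥ w).re = 1 ∧
      (star w ⬝ᵥ M *ᵥ w).re = lamMin M := by
  obtain ⟨j, hj⟩ := exists_lamMin hM hN
  refine ⟨⇑(hM.eigenvectorBasis j), ?_, ?_⟩
  · have h1 : ‖hM.eigenvectorBasis j‖ = 1 := hM.eigenvectorBasis.orthonormal.1 j
    have h2 : (inner ℂ (hM.eigenvectorBasis j) (hM.eigenvectorBasis j) : ℂ)
        = star (⇑(hM.eigenvectorBasis j)) ⬝ᵥ ⇑(hM.eigenvectorBasis j) :=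
      by rw [EuclideanSpace.inner_eq_star_dotProduct, dotProduct_comm]
    rw [← h2, inner_self_eq_norm_sq_to_K, h1]
    norm_num
  · rw [← hj, hM.eigenvalues_eq j]
    rfl

lemma key_gap (lam : Fin N → ℝ) (j₀ : Fin N) (lmin δ : ℝ) (hδ : 0 < δ)
    (hj₀ : lam j₀ = lmin) (hgap : ∀ j, j ≠ j₀ → lmin + δ ≤ lam j)
    (F : Matrix (Fin N) (Fin N) ℂ) (c : Fin N → ℂ) (hc : ∑ j, normSq (c j) = 1) :
    lmin + (F j₀ j₀).re - 4 * (∑ j, ∑ k, ‖F j k‖)^2 / δ ≤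
      (∑ j, lam j * normSq (c j)) + (star c ⬝ᵥ F *ᵥ c).re := by
  classical
  set G : ℝ := ∑ j, ∑ k, ‖F j k‖ with hG
  set T : ℝ := ∑ j ∈ Finset.univ.erase j₀, normSq (c j) with hT
  set t : ℝ := Real.sqrt T with ht
  have hT0 : 0 ≤ T := Finset.sum_nonneg fun j _ => normSq_nonneg _
  have hnj0 : normSq (c j₀) = 1 - T := by
    have := Finset.sum_erase_add Finset.univ (fun j => normSq (c j)) (Finset.mem_univ j₀)
    rw [hc] at this; linarith [this]
  have hT1 : T ≤ 1 := by nlinarith [normSq_nonneg (c j₀)]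
  have ht0 : 0 ≤ t := Real.sqrt_nonneg T
  have htt : t * t = T := Real.mul_self_sqrt hT0
  have ht1 : t ≤ 1 := by nlinarith
  have hG0 : 0 ≤ G := Finset.sum_nonneg fun j _ => Finset.sum_nonneg fun k _ =>
    norm_nonneg _
  have habs1 : ∀ j, ‖c j‖ ≤ 1 := by
    intro j
    have h1 : normSq (c j) ≤ 1 := by
      rw [← hc]
      exact Finset.single_le_sum (fun k _ => normSq_nonneg (c k)) (Finset.mem_univ j)
    nlinarith [Complex.sq_norm (c j), norm_nonneg (c j)]
  have habst : ∀ j, j ≠ j₀ → ‖c j‖ ≤ t := by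
    intro j hj
    have h1 : normSq (c j) ≤ T :=
      Finset.single_le_sum (f := fun k => normSq (c k)) (fun k _ => normSq_nonneg (c k))
        (Finset.mem_erase.mpr ⟨hj, Finset.mem_univ j⟩)
    rw [Complex.norm_def, ht]
    exact Real.sqrt_le_sqrt h1
  -- Part 1
  have part1 : lmin + δ * T ≤ ∑ j, lam j * normSq (c j) := by
    have hsplit : (∑ j ∈ Finset.univ.erase j₀, lam j * normSq (c j)) + lam j₀ * normSq (c j₀)
        = ∑ j, lam j * normSq (c j) :=
      Finset.sum_erase_add Finset.univ (fun j => lam j * normSq (c j)) (Finset.mem_univ j₀)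
    rw [hj₀, hnj0] at hsplit
    have hbound : (lmin + δ) * T ≤ ∑ j ∈ Finset.univ.erase j₀, lam j * normSq (c j) := by
      rw [hT, Finset.mul_sum]
      exact Finset.sum_le_sum fun j hj =>
        mul_le_mul_of_nonneg_right (hgap j (Finset.mem_erase.mp hj).1) (normSq_nonneg _)
    have hbound2 : lmin * T + δ * T ≤ ∑ j ∈ Finset.univ.erase j₀, lam j * normSq (c j) := by
      nlinarith [hbound]
    nlinarith [hsplit, hbound2]
  -- Part 2 : quadratic form bound
  have expand : (star c ⬝ᵥ F *ᵥ c).re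
      = ∑ p ∈ Finset.univ ×ˢ Finset.univ, ((starRingEnd ℂ) (c p.1) * (F p.1 p.2 * c p.2)).re := by
    rw [Finset.sum_product, dotProduct, Complex.re_sum]
    refine Finset.sum_congr rfl fun j _ => ?_
    simp only [Pi.star_apply, RCLike.star_def, Matrix.mulVec, dotProduct,
      Finset.mul_sum, Complex.re_sum]
  have hmem : (j₀, j₀) ∈ Finset.univ ×ˢ (Finset.univ : Finset (Fin N)) := by
    simp
  have hsplit2 : (∑ p ∈ (Finset.univ ×ˢ Finset.univ).erase (j₀, j₀),
        ((starRingEnd ℂ) (c p.1) * (F p.1 p.2 * c p.2)).re)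
        + ((starRingEnd ℂ) (c j₀) * (F j₀ j₀ * c j₀)).re
      = ∑ p ∈ Finset.univ ×ˢ Finset.univ, ((starRingEnd ℂ) (c p.1) * (F p.1 p.2 * c p.2)).re :=
    Finset.sum_erase_add (Finset.univ ×ˢ Finset.univ)
      (fun p : Fin N × Fin N => ((starRingEnd ℂ) (c p.1) * (F p.1 p.2 * c p.2)).re) hmem
  have hdiag : ((starRingEnd ℂ) (c j₀) * (F j₀ j₀ * c j₀)).re = normSq (c j₀) * (F j₀ j₀).re := by
    rw [show (starRingEnd ℂ) (c j₀) * (F j₀ j₀ * c j₀)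
        = ((starRingEnd ℂ) (c j₀) * c j₀) * F j₀ j₀ by ring, ← Complex.normSq_eq_conj_mul_self]
    exact Complex.re_ofReal_mul _ _
  have hoff : |∑ p ∈ (Finset.univ ×ˢ Finset.univ).erase (j₀, j₀),
      ((starRingEnd ℂ) (c p.1) * (F p.1 p.2 * c p.2)).re| ≤ G * t := by
    calc |∑ p ∈ (Finset.univ ×ˢ Finset.univ).erase (j₀, j₀),
        ((starRingEnd ℂ) (c p.1) * (F p.1 p.2 * c p.2)).re|
        ≤ ∑ p ∈ (Finset.univ ×ˢ Finset.univ).erase (j₀, j₀),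
          |((starRingEnd ℂ) (c p.1) * (F p.1 p.2 * c p.2)).re| :=
          Finset.abs_sum_le_sum_abs _ _
      _ ≤ ∑ p ∈ (Finset.univ ×ˢ Finset.univ).erase (j₀, j₀),
          ‖F p.1 p.2‖ * t := by
          refine Finset.sum_le_sum fun p hp => ?_
          obtain ⟨hpne, -⟩ := Finset.mem_erase.mp hp
          have h1 : |((starRingEnd ℂ) (c p.1) * (F p.1 p.2 * c p.2)).re|
              ≤ ‖c p.1‖ * (‖F p.1 p.2‖ * ‖c p.2‖) := by
            calc |((starRingEnd ℂ) (c p.1) * (F p.1 p.2 * c p.2)).re|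
                ≤ ‖(starRingEnd ℂ) (c p.1) * (F p.1 p.2 * c p.2)‖ :=
                  Complex.abs_re_le_norm _
              _ = ‖c p.1‖ * (‖F p.1 p.2‖ * ‖c p.2‖) := by
                  rw [norm_mul, norm_mul, Complex.norm_conj]
          by_cases h : p.1 = j₀
          · have h2 : p.2 ≠ j₀ := fun hk => hpne (Prod.ext h hk)
            calc |((starRingEnd ℂ) (c p.1) * (F p.1 p.2 * c p.2)).re|
                ≤ ‖c p.1‖ * (‖F p.1 p.2‖ * ‖c p.2‖) := h1
              _ ≤ 1 * (‖F p.1 p.2‖ * t) := by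
                  refine mul_le_mul (habs1 _) ?_ (by positivity) zero_le_one
                  exact mul_le_mul_of_nonneg_left (habst _ h2) (norm_nonneg _)
              _ = ‖F p.1 p.2‖ * t := one_mul _
          · calc |((starRingEnd ℂ) (c p.1) * (F p.1 p.2 * c p.2)).re|
                ≤ ‖c p.1‖ * (‖F p.1 p.2‖ * ‖c p.2‖) := h1
              _ ≤ t * (‖F p.1 p.2‖ * 1) := by
                  refine mul_le_mul (habst _ h) ?_ (by positivity) ht0
                  exact mul_le_mul_of_nonneg_left (habs1 _) (norm_nonneg _)
              _ = ‖F p.1 p.2‖ * t := by ring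
      _ ≤ ∑ p ∈ Finset.univ ×ˢ Finset.univ, ‖F p.1 p.2‖ * t := by
          refine Finset.sum_le_sum_of_subset_of_nonneg (Finset.erase_subset _ _) ?_
          intro p _ _
          positivity
      _ = G * t := by
          rw [hG, ← Finset.sum_mul, Finset.sum_product]
  have hFd : ‖F j₀ j₀‖ ≤ G := by
    calc ‖F j₀ j₀‖ ≤ ∑ k, ‖F j₀ k‖ :=
        Finset.single_le_sum (fun k _ => norm_nonneg _) (Finset.mem_univ j₀)
      _ ≤ G := Finset.single_le_sum (f := fun j => ∑ k, ‖F j k‖)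
          (fun j _ => Finset.sum_nonneg fun k _ => norm_nonneg _) (Finset.mem_univ j₀)
  have hre : |(F j₀ j₀).re| ≤ G := le_trans (Complex.abs_re_le_norm _) hFd
  have part2 : (F j₀ j₀).re - G * T - G * t ≤ (star c ⬝ᵥ F *ᵥ c).re := by
    rw [expand, ← hsplit2, hdiag, hnj0]
    have := abs_le.mp hoff
    nlinarith [abs_le.mp hre]
  -- final combination
  have httle : t * t ≤ t := by nlinarith
  have h1' : G * (t * t) ≤ G * t := mul_le_mul_of_nonneg_left httle hG0
  have hnum : 0 ≤ δ^2*(t*t) - 2*δ*G*t + 4*G^2 := by nlinarith [sq_nonneg (δ*t - G), sq_nonneg G]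
  have hqe : δ*(t*t) - 2*(G*t) + 4*G^2/δ = (δ^2*(t*t) - 2*δ*G*t + 4*G^2)/δ := by
    field_simp
  have hq : 0 ≤ δ*(t*t) - 2*(G*t) + 4*G^2/δ := by
    rw [hqe]; exact div_nonneg hnum hδ.le
  have hfinal : -(4 * G ^ 2 / δ) ≤ δ * T - G * T - G * t := by
    rw [← htt]
    linarith [hq, h1']
  linarith [part1, part2, hfinal]

lemma dot_single {c : Fin N → ℂ} {j₀ : Fin N} (hc : ∀ j, j ≠ j₀ → c j = 0)
    (F : Matrix (Fin N) (Fin N) ℂ) :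
    star c ⬝ᵥ F *ᵥ c = (starRingEnd ℂ) (c j₀) * (F j₀ j₀ * c j₀) := by
  rw [dotProduct]
  rw [Finset.sum_eq_single j₀ (fun j _ hj => by
    simp [Pi.star_apply, RCLike.star_def, hc j hj]) (by simp)]
  congr 1
  rw [Matrix.mulVec, dotProduct]
  exact Finset.sum_eq_single j₀ (fun k _ hk => by simp [hc k hk]) (by simp)

lemma dot_self_single {c : Fin N → ℂ} {j₀ : Fin N} (hc : ∀ j, j ≠ j₀ → c j = 0) :
    (star c ⬝ᵥ c).re = normSq (c j₀) := by
  rw [dot_self_re]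
  exact Finset.sum_eq_single j₀ (fun j _ hj => by simp [hc j hj]) (by simp)

lemma RQ_sum {Q : ℕ} (θv : Fin Q → ℝ) (A : Fin Q → Matrix (Fin N) (Fin N) ℂ)
    {u : Fin N → ℂ} (hu : u ≠ 0) :
    RQ (∑ q, (θv q : ℂ) • A q) u = ∑ q, θv q * RQ (A q) u := by
  have hnum : (star u ⬝ᵥ (∑ q, (θv q : ℂ) • A q) *ᵥ u).re
      = ∑ q, θv q * (star u ⬝ᵥ A q *ᵥ u).re := by
    have hmv : (∑ q, (θv q : ℂ) • A q) *ᵥ u = ∑ q, (θv q : ℂ) • (A q *ᵥ u) := by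
      ext i
      simp only [Matrix.mulVec, dotProduct, Finset.sum_apply, Matrix.smul_apply,
        Matrix.sum_apply, Pi.smul_apply, smul_eq_mul, Finset.sum_mul, Finset.mul_sum]
      rw [Finset.sum_comm]
      exact Finset.sum_congr rfl fun q _ => Finset.sum_congr rfl fun k _ => by ring
    have hds : star u ⬝ᵥ (∑ q, (θv q : ℂ) • (A q *ᵥ u)) = ∑ q, star u ⬝ᵥ ((θv q : ℂ) • (A q *ᵥ u)) := by
      simp only [dotProduct, Finset.sum_apply, Finset.mul_sum]
      rw [Finset.sum_comm]
    rw [hmv, hds, re_sum]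
    refine Finset.sum_congr rfl fun q _ => ?_
    rw [dotProduct_smul, smul_eq_mul, re_ofReal_mul]
  rw [RQ, hnum, Finset.sum_div]
  exact Finset.sum_congr rfl fun q _ => by rw [RQ, mul_div_assoc]

lemma RQ_eigen {M : Matrix (Fin N) (Fin N) ℂ} {u : Fin N → ℂ} {μ : ℝ} (hu : u ≠ 0)
    (h : M *ᵥ u = (μ : ℂ) • u) : RQ M u = μ := by
  rw [RQ, h, dotProduct_smul, smul_eq_mul, re_ofReal_mul, mul_div_assoc,
    div_self (ne_of_gt (dot_self_pos hu)), mul_one]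

-- squeeze
lemma squeeze_deriv {P : ℕ} {φ g : (Fin P → ℝ) → ℝ} {f : (Fin P → ℝ) →L[ℝ] ℝ} {x : Fin P → ℝ}
    (hφ : HasFDerivAt φ f x) (hval : g x = φ x)
    (hbound : (fun ν => g ν - φ ν) =o[nhds x] (fun ν => ν - x)) : HasFDerivAt g f x := by
  rw [hasFDerivAt_iff_isLittleO] at hφ ⊢
  have h := hbound.add hφ
  refine h.congr' (Filter.Eventually.of_forall fun ν => ?_) (Filter.Eventually.of_forall fun _ => rfl)
  rw [hval]; ring

lemma sq_isLittleO {P : ℕ} {s : (Fin P → ℝ) → ℝ} {x : Fin P → ℝ} (C : ℝ)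
    (hs : s =O[nhds x] (fun ν => ν - x)) :
    (fun ν => C * (s ν)^2) =o[nhds x] (fun ν => ν - x) := by
  have hs' : s =O[nhds x] (fun ν => ‖ν - x‖) := hs.norm_right
  have h1 : (fun ν => s ν * s ν) =O[nhds x] (fun ν => ‖ν - x‖ * ‖ν - x‖) := hs'.mul hs'
  have h2 : (fun ν : Fin P → ℝ => ‖ν - x‖ * ‖ν - x‖) =o[nhds x] (fun ν => ν - x) := by
    rw [isLittleO_iff]
    intro ε hε
    filter_upwards [Metric.ball_mem_nhds x hε] with ν hν
    rw [Metric.mem_ball, dist_eq_norm] at hν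
    have h0 : (0:ℝ) ≤ ‖ν - x‖ := norm_nonneg _
    calc ‖‖ν - x‖ * ‖ν - x‖‖ = ‖ν - x‖ * ‖ν - x‖ := by
          rw [Real.norm_of_nonneg (mul_nonneg h0 h0)]
      _ ≤ ε * ‖ν - x‖ := mul_le_mul_of_nonneg_right hν.le h0
  have h3 := h1.trans_isLittleO h2
  have h4 := h3.const_mul_left C
  refine h4.congr' (Filter.Eventually.of_forall fun ν => ?_) (Filter.Eventually.of_forall fun _ => rfl)
  ring

lemma bound_to_littleo {P : ℕ} {g φ err : (Fin P → ℝ) → ℝ} {x : Fin P → ℝ}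
    (hb : ∀ ν, |g ν - φ ν| ≤ err ν)
    (herr : err =o[nhds x] (fun ν => ν - x)) :
    (fun ν => g ν - φ ν) =o[nhds x] (fun ν => ν - x) := by
  refine IsBigO.trans_isLittleO ?_ herr
  refine Asymptotics.isBigO_of_le _ fun ν => ?_
  calc ‖g ν - φ ν‖ = |g ν - φ ν| := rfl
    _ ≤ err ν := hb ν
    _ ≤ ‖err ν‖ := le_abs_self _

lemma Ucoord_def {M : Matrix (Fin N) (Fin N) ℂ} (hM : M.IsHermitian) (w : Fin N → ℂ) :
    Ucoord hM w = star (hM.eigenvectorUnitary : Matrix (Fin N) (Fin N) ℂ) *ᵥ w := rfl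
-- THE CENTRAL LEMMA
lemma central {N Q P : ℕ} (A : Fin Q → Matrix (Fin N) (Fin N) ℂ)
    (θ : Fin Q → (Fin P → ℝ) → ℝ) (x : Fin P → ℝ)
    (hHerm : ∀ ν, (∑ q, (θ q ν : ℂ) • A q).IsHermitian)
    (hdiff : ∀ q, DifferentiableAt ℝ (θ q) x)
    (u : Fin N → ℂ) (hu0 : u ≠ 0)
    (huB : (∑ q, (θ q x : ℂ) • A q) *ᵥ u = (lamMin (∑ q, (θ q x : ℂ) • A q) : ℂ) • u)
    (hsimple : ∃! j, (hHerm x).eigenvalues j = lamMin (∑ q, (θ q x : ℂ) • A q)) :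
    ∃ f : (Fin P → ℝ) →L[ℝ] ℝ,
      HasFDerivAt (fun ν => ∑ q, θ q ν * RQ (A q) u) f x ∧
      (∀ ν, lamMin (∑ q, (θ q ν : ℂ) • A q) ≤ ∑ q, θ q ν * RQ (A q) u) ∧
      (∑ q, θ q x * RQ (A q) u) = lamMin (∑ q, (θ q x : ℂ) • A q) ∧
      HasFDerivAt (fun ν => lamMin (∑ q, (θ q ν : ℂ) • A q)) f x ∧
      ((fun ν => lamMin (∑ q, (θ q ν : ℂ) • A q) - ∑ q, θ q ν * RQ (A q) u)
        =o[nhds x] (fun ν => ν - x)) := by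
  classical
  obtain ⟨j₀, hj₀, huniq⟩ := hsimple
  have hBh : (∑ q, (θ q x : ℂ) • A q).IsHermitian := hHerm x
  have hN : 0 < N := j₀.pos
  set B : Matrix (Fin N) (Fin N) ℂ := ∑ q, (θ q x : ℂ) • A q with hBdef
  set U : Matrix (Fin N) (Fin N) ℂ := (hBh.eigenvectorUnitary : Matrix (Fin N) (Fin N) ℂ)
    with hUdef
  -- the spectral gap
  obtain ⟨δ, hδ, hgap⟩ : ∃ δ, 0 < δ ∧ ∀ j, j ≠ j₀ → lamMin B + δ ≤ hBh.eigenvalues j := by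
    by_cases hne : (Finset.univ.erase j₀).Nonempty
    · refine ⟨(Finset.univ.erase j₀).inf' hne (fun j => hBh.eigenvalues j - lamMin B), ?_, ?_⟩
      · rw [Finset.lt_inf'_iff]
        intro j hj
        have hjne := (Finset.mem_erase.mp hj).1
        have hne2 : hBh.eigenvalues j ≠ lamMin B := fun h => hjne (huniq j h)
        have := lamMin_le hBh j
        have : lamMin B < hBh.eigenvalues j := lt_of_le_of_ne this (Ne.symm hne2)
        linarith
      · intro j hj
        have := Finset.inf'_le (fun j => hBh.eigenvalues j - lamMin B)
          (Finset.mem_erase.mpr ⟨hj, Finset.mem_univ j⟩)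
        linarith
    · exact ⟨1, one_pos, fun j hj =>
        (hne ⟨j, Finset.mem_erase.mpr ⟨hj, Finset.mem_univ j⟩⟩).elim⟩
  -- coordinates of the eigenvector u
  have hcv0 : ∀ j, j ≠ j₀ → Ucoord hBh u j = 0 := fun j hj =>
    eigen_coord hBh huB (fun h => hj (huniq j h))
  have hγ : Ucoord hBh u j₀ ≠ 0 := by
    intro h
    refine Ucoord_ne_zero hBh hu0 (funext fun j => ?_)
    by_cases hj : j = j₀
    · rwa [hj]
    · exact hcv0 j hj
  have hnγ : 0 < normSq (Ucoord hBh u j₀) := normSq_pos.mpr hγ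
  -- denominator of RQ for u
  have hden : (star u ⬝ᵥ u).re = normSq (Ucoord hBh u j₀) := by
    rw [dot_eigen_re hBh u]
    exact Finset.sum_eq_single j₀ (fun j _ hj => by simp [hcv0 j hj]) (by simp)
  -- RQ of each A q at u is the (j₀,j₀) entry of the conjugated matrix
  have hr : ∀ q : Fin Q, RQ (A q) u = ((star U * A q * U) j₀ j₀).re := by
    intro q
    have h1 : star u ⬝ᵥ (A q) *ᵥ u
        = (starRingEnd ℂ) (Ucoord hBh u j₀) * ((star U * A q * U) j₀ j₀ * Ucoord hBh u j₀) := by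
      rw [← qform_coord U (A q) hBh.eigenvectorUnitary.2 u, ← Ucoord_def hBh u,
        dot_single hcv0]
    have h2 : (star u ⬝ᵥ (A q) *ᵥ u).re
        = normSq (Ucoord hBh u j₀) * ((star U * A q * U) j₀ j₀).re := by
      rw [h1, show (starRingEnd ℂ) (Ucoord hBh u j₀) * ((star U * A q * U) j₀ j₀ *
          Ucoord hBh u j₀) = ((starRingEnd ℂ) (Ucoord hBh u j₀) * Ucoord hBh u j₀) *
          (star U * A q * U) j₀ j₀ by ring, ← Complex.normSq_eq_conj_mul_self]
      exact Complex.re_ofReal_mul _ _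
    rw [RQ, h2, hden]
    field_simp
  -- linearity of the conjugation
  have hFlin : ∀ ν, star U * (∑ q, (θ q ν : ℂ) • A q) * U
      = ∑ q, (θ q ν : ℂ) • (star U * A q * U) := by
    intro ν
    rw [Matrix.mul_sum, Matrix.sum_mul]
    exact Finset.sum_congr rfl fun q _ => by
      rw [Matrix.mul_smul, Matrix.smul_mul]
  -- φ and its identities
  have hφRQ : ∀ ν, (∑ q, θ q ν * RQ (A q) u) = RQ (∑ q, (θ q ν : ℂ) • A q) u := fun ν =>
    (RQ_sum (fun q => θ q ν) A hu0).symm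
  have hφx : (∑ q, θ q x * RQ (A q) u) = lamMin B := by
    rw [hφRQ x]
    exact RQ_eigen hu0 huB
  have hupper : ∀ ν, lamMin (∑ q, (θ q ν : ℂ) • A q) ≤ ∑ q, θ q ν * RQ (A q) u := fun ν => by
    rw [hφRQ ν]; exact lamMin_le_RQ (hHerm ν) hu0
  -- error functional
  set G : Fin Q → ℝ := fun q => ∑ j, ∑ k, ‖(star U * A q * U) j k‖ with hGdef
  set S : (Fin P → ℝ) → ℝ := fun ν => ∑ q, |θ q ν - θ q x| * G q with hSdef
  have hGnn : ∀ q, 0 ≤ G q := fun q => Finset.sum_nonneg fun j _ =>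
    Finset.sum_nonneg fun k _ => norm_nonneg _
  have hSnn : ∀ ν, 0 ≤ S ν := fun ν => Finset.sum_nonneg fun q _ =>
    mul_nonneg (abs_nonneg _) (hGnn q)
  -- the lower bound
  have hlower : ∀ ν, (∑ q, θ q ν * RQ (A q) u) - 4 * (S ν)^2 / δ
      ≤ lamMin (∑ q, (θ q ν : ℂ) • A q) := by
    intro ν
    obtain ⟨w, hw1, hw2⟩ := exists_unit_qform_eq_lamMin (hHerm ν) hN
    have hc1 : ∑ j, normSq (Ucoord hBh w j) = 1 := by rw [← dot_eigen_re hBh w]; exact hw1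
    set Fd : Matrix (Fin N) (Fin N) ℂ :=
      star U * ((∑ q, (θ q ν : ℂ) • A q) - B) * U with hFdDef
    have hFdsum : Fd = ∑ q, ((θ q ν - θ q x : ℝ) : ℂ) • (star U * A q * U) := by
      rw [hFdDef, Matrix.mul_sub, Matrix.sub_mul, hFlin ν, hBdef, hFlin x,
        ← Finset.sum_sub_distrib]
      exact Finset.sum_congr rfl fun q _ => by
        rw [← sub_smul]; push_cast; ring_nf
    -- quadratic form split
    have hqE : (star (Ucoord hBh w) ⬝ᵥ Fd *ᵥ (Ucoord hBh w)).re
        = (star w ⬝ᵥ ((∑ q, (θ q ν : ℂ) • A q) - B) *ᵥ w).re := by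
      rw [Ucoord_def hBh w]
      exact congrArg Complex.re
        (qform_coord U ((∑ q, (θ q ν : ℂ) • A q) - B) hBh.eigenvectorUnitary.2 w)
    have hsplitq : lamMin (∑ q, (θ q ν : ℂ) • A q)
        = (∑ j, hBh.eigenvalues j * normSq (Ucoord hBh w j))
          + (star (Ucoord hBh w) ⬝ᵥ Fd *ᵥ (Ucoord hBh w)).re := by
      rw [← hw2, hqE, ← qform_eigen_re hBh w, Matrix.sub_mulVec, dotProduct_sub,
        Complex.sub_re]
      ring
    have hkey := key_gap hBh.eigenvalues j₀ (lamMin B) δ hδ hj₀ hgap Fd (Ucoord hBh w) hc1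
    -- identify the diagonal entry
    have hFdentry : (Fd j₀ j₀).re = (∑ q, θ q ν * RQ (A q) u) - lamMin B := by
      have e1 : Fd = star U * (∑ q, (θ q ν : ℂ) • A q) * U - star U * B * U := by
        rw [hFdDef, Matrix.mul_sub, Matrix.sub_mul]
      rw [e1, Matrix.sub_apply, Complex.sub_re, hFlin ν, diag_eq hBh]
      have e2 : ((∑ q, (θ q ν : ℂ) • (star U * A q * U)) j₀ j₀).re
          = ∑ q, θ q ν * RQ (A q) u := by
        rw [Matrix.sum_apply]
        rw [Complex.re_sum]
        refine Finset.sum_congr rfl fun q _ => ?_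
        rw [Matrix.smul_apply, smul_eq_mul, Complex.re_ofReal_mul, hr q]
      rw [e2, Matrix.diagonal_apply_eq, Complex.ofReal_re, hj₀]
    -- bound the entrywise sum
    have hGF : ∑ j, ∑ k, ‖Fd j k‖ ≤ S ν := by
      rw [hSdef]
      have hterm : ∀ j k, ‖Fd j k‖
          ≤ ∑ q, |θ q ν - θ q x| * ‖(star U * A q * U) j k‖ := by
        intro j k
        rw [hFdsum]
        rw [Matrix.sum_apply]
        refine le_trans (norm_sum_le _ _) (Finset.sum_le_sum fun q _ => ?_)
        rw [Matrix.smul_apply, smul_eq_mul, norm_mul, Complex.norm_real, Real.norm_eq_abs]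
      calc ∑ j, ∑ k, ‖Fd j k‖
          ≤ ∑ j, ∑ k, ∑ q, |θ q ν - θ q x| * ‖(star U * A q * U) j k‖ :=
            Finset.sum_le_sum fun j _ => Finset.sum_le_sum fun k _ => hterm j k
        _ = ∑ q, |θ q ν - θ q x| * G q := by
            rw [hGdef]
            simp only [Finset.mul_sum]
            have hswap : ∀ j : Fin N, (∑ k, ∑ q, |θ q ν - θ q x|
                * ‖(star U * A q * U) j k‖)
                = ∑ q, ∑ k, |θ q ν - θ q x| * ‖(star U * A q * U) j k‖ :=
              fun j => Finset.sum_comm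
            simp_rw [hswap]
            exact Finset.sum_comm
    have hGFnn : 0 ≤ ∑ j, ∑ k, ‖Fd j k‖ := Finset.sum_nonneg fun j _ =>
      Finset.sum_nonneg fun k _ => norm_nonneg _
    have hmono : 4 * (∑ j, ∑ k, ‖Fd j k‖)^2 / δ ≤ 4 * (S ν)^2 / δ := by
      gcongr <;> first | exact hGFnn | positivity
    rw [hsplitq]
    linarith [hkey, hFdentry, hmono]
  -- |lamMin ∘ A - φ| ≤ err
  have herrnn : ∀ ν, 0 ≤ 4 * (S ν)^2 / δ := fun ν => by positivity
  have habs : ∀ ν, |lamMin (∑ q, (θ q ν : ℂ) • A q) - ∑ q, θ q ν * RQ (A q) u|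
      ≤ 4 * (S ν)^2 / δ := by
    intro ν
    rw [abs_le]
    constructor <;> [linarith [hlower ν]; linarith [hupper ν, herrnn ν]]
  -- S is big-O
  have hS : S =O[nhds x] (fun ν => ν - x) := by
    rw [hSdef]
    refine IsBigO.fun_sum fun q _ => ?_
    have h1 : (fun ν => θ q ν - θ q x) =O[nhds x] (fun ν => ν - x) := (hdiff q).isBigO_sub
    have h2 := (h1.abs_left.const_mul_left (G q))
    refine h2.congr_left fun ν => ?_
    ring
  have herr : (fun ν => 4 * (S ν)^2 / δ) =o[nhds x] (fun ν => ν - x) := by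
    have := sq_isLittleO (4 / δ) hS
    refine this.congr' (Filter.Eventually.of_forall fun ν => ?_)
      (Filter.Eventually.of_forall fun _ => rfl)
    ring
  -- the derivative of φ
  have hφdiff : DifferentiableAt ℝ (fun ν => ∑ q, θ q ν * RQ (A q) u) x := by
    refine DifferentiableAt.fun_sum fun q _ => ?_
    exact (hdiff q).mul_const _
  refine ⟨fderiv ℝ (fun ν => ∑ q, θ q ν * RQ (A q) u) x, hφdiff.hasFDerivAt, hupper, hφx, ?_, ?_⟩
  · refine squeeze_deriv hφdiff.hasFDerivAt hφx.symm ?_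
    exact bound_to_littleo habs herr
  · exact bound_to_littleo habs herr

end AuxiliaryLemmas

section MainTheorem
open Complex Asymptotics Filter

/-- Hermite interpolation of the SCM upper bound: if `μᵢ` is an interior
point of `D`, each `θ_q` is differentiable at `μᵢ`, and `λ_min(A(μᵢ))` is a simple
eigenvalue, then the SCM upper bound function and the smallest-eigenvalue function have the
same value and the same (Fréchet) derivative at `μᵢ`. -/
theorem scm_upper_bound_hermite_interpolation
    {N Q P J : ℕ} (A : Fin Q → Matrix (Fin N) (Fin N) ℂ)
    (hA : ∀ q, (A q).IsHermitian) (θ : Fin Q → (Fin P → ℝ) → ℝ)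
    (D : Set (Fin P → ℝ)) (μs : Fin J → (Fin P → ℝ)) (hμs : ∀ i, μs i ∈ D)
    (hHerm : ∀ ν : Fin P → ℝ, (∑ q, (θ q ν : ℂ) • A q).IsHermitian)
    (hJ : 0 < J) (i₀ : Fin J) (hint : μs i₀ ∈ interior D)
    (hdiff : ∀ q, DifferentiableAt ℝ (θ q) (μs i₀))
    (hsimple : Fintype.card
        {j // (hHerm (μs i₀)).eigenvalues j = lamMin (∑ q, (θ q (μs i₀) : ℂ) • A q)} = 1)
    (v : Fin J → (Fin N → ℂ)) (hv0 : ∀ i, v i ≠ 0)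
    (hv : ∀ i, (∑ q, (θ q (μs i) : ℂ) • A q) *ᵥ v i
        = (lamMin (∑ q, (θ q (μs i) : ℂ) • A q) : ℂ) • v i)
    (lamUB lamminfun : (Fin P → ℝ) → ℝ)
    (hUB : ∀ ν, lamUB ν = Finset.univ.inf' (Finset.univ_nonempty_iff.mpr ⟨i₀⟩)
        fun i => ∑ q, θ q ν * RQ (A q) (v i))
    (hmin : ∀ ν, lamminfun ν = lamMin (∑ q, (θ q ν : ℂ) • A q)) :
    lamUB (μs i₀) = lamminfun (μs i₀) ∧
    ∃ f : (Fin P → ℝ) →L[ℝ] ℝ,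
      HasFDerivAt lamUB f (μs i₀) ∧ HasFDerivAt lamminfun f (μs i₀) := by
  classical
  have hsimple' : ∃! j, (hHerm (μs i₀)).eigenvalues j
      = lamMin (∑ q, (θ q (μs i₀) : ℂ) • A q) := by
    obtain ⟨⟨j₀, hj₀⟩, hu⟩ := Fintype.card_eq_one_iff.mp hsimple
    exact ⟨j₀, hj₀, fun j hj => congrArg Subtype.val (hu ⟨j, hj⟩)⟩
  obtain ⟨f, hφD, hupper, hval, hminD, ho⟩ :=
    central A θ (μs i₀) hHerm hdiff (v i₀) (hv0 i₀) (hv i₀) hsimple'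
  have hminfun : lamminfun = fun ν => lamMin (∑ q, (θ q ν : ℂ) • A q) := funext hmin
  -- bounds for lamUB
  have hUBle : ∀ ν, lamUB ν ≤ ∑ q, θ q ν * RQ (A q) (v i₀) := fun ν => by
    rw [hUB ν]
    exact Finset.inf'_le _ (Finset.mem_univ i₀)
  have hUBge : ∀ ν, lamMin (∑ q, (θ q ν : ℂ) • A q) ≤ lamUB ν := fun ν => by
    rw [hUB ν]
    refine Finset.le_inf' _ _ fun i _ => ?_
    calc lamMin (∑ q, (θ q ν : ℂ) • A q) ≤ RQ (∑ q, (θ q ν : ℂ) • A q) (v i) :=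
        lamMin_le_RQ (hHerm ν) (hv0 i)
      _ = ∑ q, θ q ν * RQ (A q) (v i) := RQ_sum (fun q => θ q ν) A (hv0 i)
  -- value equality
  have hUBval : lamUB (μs i₀) = ∑ q, θ q (μs i₀) * RQ (A q) (v i₀) := by
    refine le_antisymm (hUBle _) ?_
    calc (∑ q, θ q (μs i₀) * RQ (A q) (v i₀)) = lamMin (∑ q, (θ q (μs i₀) : ℂ) • A q) := hval
      _ ≤ lamUB (μs i₀) := hUBge _
  have hvaleq : lamUB (μs i₀) = lamminfun (μs i₀) := by
    rw [hUBval, hval, hmin]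
  refine ⟨hvaleq, f, ?_, ?_⟩
  · -- derivative of lamUB
    refine squeeze_deriv hφD hUBval ?_
    refine bound_to_littleo (err := fun ν => |lamMin (∑ q, (θ q ν : ℂ) • A q)
      - ∑ q, θ q ν * RQ (A q) (v i₀)|) (fun ν => ?_) ?_
    · show |lamUB ν - ∑ q, θ q ν * RQ (A q) (v i₀)|
          ≤ |lamMin (∑ q, (θ q ν : ℂ) • A q) - ∑ q, θ q ν * RQ (A q) (v i₀)|
      have h1 := hUBle ν
      have h2 := hUBge ν
      have h3 := hupper ν
      rw [abs_of_nonpos (by linarith), abs_of_nonpos (by linarith)]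
      linarith
    · have := ho.norm_left
      exact this
  · rw [hminfun]
    exact hminD

end MainTheorem
end

section
/- (Limitation of SCM lower bounds) Let C_J = {μ₁,...,μ_J} with J < N and fix μ̃ ∈ D. Then there exist Hermitian matrices Ā₁,...,Ā_Q ∈ ℂ^(N×N) such that the matrix function Ā(μ) = Σ_q θ_q(μ) Ā_q satisfies λ_min(Ā(μ̃)) = λ_LB(μ̃;C_J) and λ_min(Ā(μᵢ)) = λ_min(A(μᵢ)) for all i = 1,...,J. Explicitly, one may take Ā_q = VV*A_qVV* + y_q V⊥V⊥*, where V, V⊥ are orthonormal bases of the span 𝒱 of eigenvectors v₁,...,v_J (for the smallest eigenvalues at μ₁,...,μ_J) and its orthogonal complement, and y ∈ ℝ^Q is a minimizer achieving λ_LB(μ̃;C_J) = θ(μ̃)ᵀ y over 𝒴_LB(C_J). -/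
open Matrix

namespace SCMAux

variable {n : ℕ}

lemma dot_self_eq (z : Fin n → ℂ) :
    star z ⬝ᵥ z = ((∑ j, Complex.normSq (z j) : ℝ) : ℂ) := by
  simp [dotProduct, Complex.normSq_eq_conj_mul_self, Pi.star_apply]

lemma dot_re_nonneg (z : Fin n → ℂ) : 0 ≤ (star z ⬝ᵥ z).re := by
  rw [dot_self_eq, Complex.ofReal_re]
  exact Finset.sum_nonneg fun j _ => Complex.normSq_nonneg _

lemma dot_re_eq_zero {z : Fin n → ℂ} (h : (star z ⬝ᵥ z).re = 0) : z = 0 := by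
  rw [dot_self_eq, Complex.ofReal_re] at h
  funext j
  have := (Finset.sum_eq_zero_iff_of_nonneg (fun j _ => Complex.normSq_nonneg (z j))).mp h j
    (Finset.mem_univ j)
  simpa using Complex.normSq_eq_zero.mp this

lemma rayleigh_repr {B : Matrix (Fin n) (Fin n) ℂ} (hB : B.IsHermitian) (u : Fin n → ℂ) :
    ∃ x : Fin n → ℂ, (star u ⬝ᵥ u).re = ∑ j, Complex.normSq (x j) ∧
      (star u ⬝ᵥ B *ᵥ u).re = ∑ j, hB.eigenvalues j * Complex.normSq (x j) := by
  set U : Matrix (Fin n) (Fin n) ℂ := (hB.eigenvectorUnitary : Matrix (Fin n) (Fin n) ℂ) with hU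
  have hUU : U * star U = 1 := (Matrix.mem_unitaryGroup_iff).mp hB.eigenvectorUnitary.2
  set x : Fin n → ℂ := star U *ᵥ u with hx
  have hsx : star x = star u ᵥ* U := by
    rw [hx, star_mulVec, star_eq_conjTranspose, conjTranspose_conjTranspose]
  refine ⟨x, ?_, ?_⟩
  · have h1 : star x ⬝ᵥ x = star u ⬝ᵥ u := by
      rw [hsx, hx, dotProduct_mulVec, vecMul_vecMul, hUU, vecMul_one]
    rw [← h1, dot_self_eq, Complex.ofReal_re]
  · have h2 : star u ⬝ᵥ B *ᵥ u
        = star x ⬝ᵥ (diagonal (Complex.ofReal ∘ hB.eigenvalues)) *ᵥ x := by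
      conv_lhs => rw [hB.spectral_theorem, Unitary.conjStarAlgAut_apply]
      rw [← Matrix.mulVec_mulVec, ← Matrix.mulVec_mulVec, dotProduct_mulVec, ← hsx, ← hx]
      rfl
    rw [h2]
    have h3 : star x ⬝ᵥ (diagonal (Complex.ofReal ∘ hB.eigenvalues)) *ᵥ x
        = ∑ j, ((hB.eigenvalues j : ℂ) * (Complex.normSq (x j) : ℂ)) := by
      simp only [dotProduct, mulVec_diagonal, Pi.star_apply, Function.comp_apply]
      refine Finset.sum_congr rfl fun j _ => ?_
      rw [Complex.normSq_eq_conj_mul_self]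
      simp only [Pi.star_apply, Complex.star_def]
      ring
    rw [h3, Complex.re_sum]
    refine Finset.sum_congr rfl fun j _ => ?_
    rw [← Complex.ofReal_mul, Complex.ofReal_re]

lemma lamMin_le_rayleigh {B : Matrix (Fin n) (Fin n) ℂ} (hB : B.IsHermitian)
    (u : Fin n → ℂ) : lamMin B * (star u ⬝ᵥ u).re ≤ (star u ⬝ᵥ B *ᵥ u).re := by
  obtain ⟨x, h1, h2⟩ := rayleigh_repr hB u
  rw [h1, h2, Finset.mul_sum]
  refine Finset.sum_le_sum fun j _ => ?_
  have : lamMin B ≤ hB.eigenvalues j := by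
    rw [lamMin, dif_pos hB]
    exact ciInf_le (Finite.bddBelow_range _) j
  exact mul_le_mul_of_nonneg_right this (Complex.normSq_nonneg _)

lemma rayleigh_le_lamMax {B : Matrix (Fin n) (Fin n) ℂ} (hB : B.IsHermitian)
    (u : Fin n → ℂ) : (star u ⬝ᵥ B *ᵥ u).re ≤ lamMax B * (star u ⬝ᵥ u).re := by
  obtain ⟨x, h1, h2⟩ := rayleigh_repr hB u
  rw [h1, h2, Finset.mul_sum]
  refine Finset.sum_le_sum fun j _ => ?_
  have : hB.eigenvalues j ≤ lamMax B := by
    rw [lamMax, dif_pos hB]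
    exact le_ciSup (Finite.bddAbove_range _) j
  exact mul_le_mul_of_nonneg_right this (Complex.normSq_nonneg _)

lemma exists_min_eigvec {B : Matrix (Fin n) (Fin n) ℂ} (hB : B.IsHermitian) (hn : 0 < n) :
    ∃ e : Fin n → ℂ, star e ⬝ᵥ e = 1 ∧ B *ᵥ e = (lamMin B : ℂ) • e := by
  have : Nonempty (Fin n) := Fin.pos_iff_nonempty.mp hn
  obtain ⟨i0, hi0⟩ : ∃ i0, hB.eigenvalues i0 = ⨅ i, hB.eigenvalues i :=
    exists_eq_ciInf_of_finite
  refine ⟨⇑(hB.eigenvectorBasis i0), ?_, ?_⟩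
  · have h := hB.eigenvectorBasis.orthonormal.1 i0
    have h2 : (inner ℂ (hB.eigenvectorBasis i0) (hB.eigenvectorBasis i0) : ℂ) = 1 := by
      rw [inner_self_eq_norm_sq_to_K, h]
      norm_num
    rw [EuclideanSpace.inner_eq_star_dotProduct, dotProduct_comm] at h2
    simpa using h2
  · have h := hB.mulVec_eigenvectorBasis i0
    rw [h, lamMin, dif_pos hB, ← hi0]
    funext j
    simp [Complex.real_smul]

lemma lamMin_eq_of {B : Matrix (Fin n) (Fin n) ℂ} (hB : B.IsHermitian) (hn : 0 < n)
    (t : ℝ) (e : Fin n → ℂ) (he : star e ⬝ᵥ e = 1) (heig : B *ᵥ e = (t : ℂ) • e)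
    (hlb : ∀ u : Fin n → ℂ, t * (star u ⬝ᵥ u).re ≤ (star u ⬝ᵥ B *ᵥ u).re) :
    lamMin B = t := by
  have hre : (star e ⬝ᵥ B *ᵥ e).re = t := by
    rw [heig, dotProduct_smul, he]
    simp
  refine le_antisymm ?_ ?_
  · have := lamMin_le_rayleigh hB e
    rw [he, hre] at this
    simpa using this
  · obtain ⟨e0, he0, heig0⟩ := exists_min_eigvec hB hn
    have h1 := hlb e0
    rw [he0, heig0, dotProduct_smul, he0] at h1
    simpa using h1

lemma sum_mulVec {ι : Type*} (s : Finset ι) (M : ι → Matrix (Fin n) (Fin n) ℂ)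
    (z : Fin n → ℂ) : (∑ i ∈ s, M i) *ᵥ z = ∑ i ∈ s, M i *ᵥ z := by
  funext j
  simp only [mulVec, dotProduct, Finset.sum_apply, Matrix.sum_apply, Finset.sum_mul]
  exact Finset.sum_comm

lemma dotProduct_sum' {ι : Type*} (s : Finset ι) (v : Fin n → ℂ) (f : ι → Fin n → ℂ) :
    v ⬝ᵥ (∑ i ∈ s, f i) = ∑ i ∈ s, v ⬝ᵥ f i := by
  simp only [dotProduct, Finset.sum_apply, Finset.mul_sum]
  exact Finset.sum_comm

end SCMAux

open SCMAux in
/-- limitation of the SCM lower bounds: if `J < N`, then for any fixed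
`μ̃ ∈ D` there exist Hermitian matrices `Ā_q` such that `Ā(μ) = ∑ q, θ_q(μ) Ā_q`
attains the SCM lower bound at `μ̃` and reproduces the sampled smallest eigenvalues:
`λ_min(Ā(μ̃)) = λ_LB(μ̃;C_J)` and `λ_min(Ā(μᵢ)) = λ_min(A(μᵢ))` for all `i`. -/
theorem scm_lower_bound_limitation
    {N Q P J : ℕ} (A : Fin Q → Matrix (Fin N) (Fin N) ℂ)
    (hA : ∀ q, (A q).IsHermitian) (θ : Fin Q → (Fin P → ℝ) → ℝ)
    (D : Set (Fin P → ℝ)) (μs : Fin J → (Fin P → ℝ)) (hμs : ∀ i, μs i ∈ D)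
    (μt : Fin P → ℝ) (hμt : μt ∈ D)
    (hHerm : ∀ ν : Fin P → ℝ, (∑ q, (θ q ν : ℂ) • A q).IsHermitian)
    (hJN : J < N)
    -- `v i` is a unit eigenvector of `A(μᵢ)` for its smallest eigenvalue
    (v : Fin J → (Fin N → ℂ)) (hv1 : ∀ i, star (v i) ⬝ᵥ v i = 1)
    (hv : ∀ i, (∑ q, (θ q (μs i) : ℂ) • A q) *ᵥ v i
        = (lamMin (∑ q, (θ q (μs i) : ℂ) • A q) : ℂ) • v i)
    -- `y` is a minimizer of the SCM linear program at `μ̃`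
    (y : Fin Q → ℝ)
    (hybox : ∀ q, lamMin (A q) ≤ y q ∧ y q ≤ lamMax (A q))
    (hycon : ∀ i : Fin J, ∑ q, θ q (μs i) * y q ≥ lamMin (∑ q, (θ q (μs i) : ℂ) • A q))
    (lamLB : ℝ) (hlamLB : lamLB = ∑ q, θ q μt * y q)
    (hymin : IsLeast {r : ℝ | ∃ z : Fin Q → ℝ,
        (∀ q, lamMin (A q) ≤ z q ∧ z q ≤ lamMax (A q)) ∧
        (∀ i : Fin J, ∑ q, θ q (μs i) * z q ≥ lamMin (∑ q, (θ q (μs i) : ℂ) • A q)) ∧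
        r = ∑ q, θ q μt * z q} lamLB) :
    ∃ Abar : Fin Q → Matrix (Fin N) (Fin N) ℂ,
      (∀ q, (Abar q).IsHermitian) ∧
      lamMin (∑ q, (θ q μt : ℂ) • Abar q) = lamLB ∧
      ∀ i : Fin J, lamMin (∑ q, (θ q (μs i) : ℂ) • Abar q)
          = lamMin (∑ q, (θ q (μs i) : ℂ) • A q) := by
  classical
  have hN : 0 < N := lt_of_le_of_lt (Nat.zero_le J) hJN
  -- ### Step 1: find a unit vector `w` orthogonal to all `v i`.
  obtain ⟨w, hw1, hwv⟩ : ∃ w : Fin N → ℂ, star w ⬝ᵥ w = 1 ∧ ∀ i, star (v i) ⬝ᵥ w = 0 := by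
    set v' : Fin J → EuclideanSpace ℂ (Fin N) := fun i => (WithLp.equiv 2 _).symm (v i) with hv'
    set V : Submodule ℂ (EuclideanSpace ℂ (Fin N)) := Submodule.span ℂ (Set.range v') with hV
    have hVle : Module.finrank ℂ V ≤ J := by
      have h1 := finrank_span_le_card (R := ℂ) (Set.range v')
      have h2 : (Set.range v').toFinset.card ≤ J := by
        rw [Set.toFinset_range]
        exact le_trans Finset.card_image_le (by simp)
      exact le_trans h1 h2
    have hVo : Vᗮ ≠ ⊥ := by
      intro hbot
      have h3 := Submodule.finrank_add_finrank_orthogonal V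
      rw [hbot, finrank_bot, add_zero, finrank_euclideanSpace_fin] at h3
      omega
    obtain ⟨x, hxV, hx0⟩ := Submodule.exists_mem_ne_zero_of_ne_bot hVo
    set w0 : EuclideanSpace ℂ (Fin N) := (‖x‖⁻¹ : ℝ) • x with hw0
    have hw0n : ‖w0‖ = 1 := norm_smul_inv_norm hx0
    have hinner : ∀ i, (inner ℂ (v' i) w0 : ℂ) = 0 := by
      intro i
      have hmem : v' i ∈ V := Submodule.subset_span (Set.mem_range_self i)
      have hx := (Submodule.mem_orthogonal V x).mp hxV (v' i) hmem
      rw [hw0, RCLike.real_smul_eq_coe_smul (K := ℂ), inner_smul_right, hx, mul_zero]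
    refine ⟨(WithLp.equiv 2 _) w0, ?_, ?_⟩
    · have h2 : (inner ℂ w0 w0 : ℂ) = 1 := by
        rw [inner_self_eq_norm_sq_to_K, hw0n]
        norm_num
      rw [EuclideanSpace.inner_eq_star_dotProduct, dotProduct_comm] at h2
      simpa using h2
    · intro i
      have h2 := hinner i
      rw [EuclideanSpace.inner_eq_star_dotProduct, dotProduct_comm] at h2
      simpa [hv'] using h2
  have hwv' : ∀ i, star w ⬝ᵥ v i = 0 := by
    intro i
    rw [star_dotProduct, hwv i, star_zero]
  -- ### Step 2: set up the projection matrices.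
  set W : Matrix (Fin N) (Fin N) ℂ := vecMulVec w (star w) with hWdef
  have hWmul : ∀ u : Fin N → ℂ, W *ᵥ u = (star w ⬝ᵥ u) • w := by
    intro u
    funext j
    simp only [hWdef, mulVec, dotProduct, vecMulVec_apply, Pi.smul_apply, smul_eq_mul,
      Finset.sum_mul, Pi.star_apply]
    refine Finset.sum_congr rfl fun k _ => ?_
    ring
  have hWH : W.conjTranspose = W := by
    funext i j
    simp only [hWdef, conjTranspose_apply, vecMulVec_apply, Pi.star_apply, star_mul']
    simp [mul_comm]
  set Qm : Matrix (Fin N) (Fin N) ℂ := 1 - W with hQdef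
  have hQH : Qm.conjTranspose = Qm := by
    simp [hQdef, conjTranspose_sub, hWH]
  have hQv : ∀ u : Fin N → ℂ, Qm *ᵥ u = u - (star w ⬝ᵥ u) • w := by
    intro u
    rw [hQdef, sub_mulVec, one_mulVec, hWmul]
  have hQw : Qm *ᵥ w = 0 := by
    rw [hQv, hw1, one_smul, sub_self]
  have hQvi : ∀ i, Qm *ᵥ v i = v i := by
    intro i
    rw [hQv, hwv' i, zero_smul, sub_zero]
  have hwQu : ∀ u : Fin N → ℂ, star w ⬝ᵥ (Qm *ᵥ u) = 0 := by
    intro u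
    rw [hQv, dotProduct_sub, dotProduct_smul, hw1, smul_eq_mul, mul_one, sub_self]
  -- ### Step 3: the matrices `Abar`.
  set Abar : Fin Q → Matrix (Fin N) (Fin N) ℂ :=
    fun q => Qm * A q * Qm + (y q : ℂ) • W with hAbar
  have hsmulH : ∀ r : ℝ, ((r : ℂ) • W).conjTranspose = (r : ℂ) • W := by
    intro r
    rw [conjTranspose_smul, hWH]
    congr 1
    simp [Complex.star_def, Complex.conj_ofReal]
  have hAbarH : ∀ q, (Abar q).IsHermitian := by
    intro q
    have h1 : (Qm * A q * Qm).IsHermitian := by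
      have := isHermitian_mul_mul_conjTranspose Qm (hA q)
      rwa [hQH] at this
    exact h1.add (hsmulH (y q))
  -- ### Step 4: sum identity.
  have hsum : ∀ ν : Fin P → ℝ, ∑ q, (θ q ν : ℂ) • Abar q
      = Qm * (∑ q, (θ q ν : ℂ) • A q) * Qm + ((∑ q, θ q ν * y q : ℝ) : ℂ) • W := by
    intro ν
    rw [hAbar]
    simp only [smul_add]
    rw [Finset.sum_add_distrib]
    congr 1
    · rw [Finset.mul_sum, Finset.sum_mul]
      refine Finset.sum_congr rfl fun q _ => ?_
      rw [mul_smul_comm, smul_mul_assoc]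
    · simp only [smul_smul]
      rw [← Finset.sum_smul]
      congr 1
      push_cast
      rfl
  have hMbarH : ∀ ν : Fin P → ℝ, (∑ q, (θ q ν : ℂ) • Abar q).IsHermitian := by
    intro ν
    rw [hsum ν]
    have h1 : (Qm * (∑ q, (θ q ν : ℂ) • A q) * Qm).IsHermitian := by
      have := isHermitian_mul_mul_conjTranspose Qm (hHerm ν)
      rwa [hQH] at this
    exact h1.add (hsmulH _)
  -- ### Step 5: quadratic form decomposition.
  have hdotQ : ∀ (Mν : Matrix (Fin N) (Fin N) ℂ) (u z : Fin N → ℂ),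
      star u ⬝ᵥ (Qm *ᵥ z) = star (Qm *ᵥ u) ⬝ᵥ z := by
    intro Mν u z
    rw [dotProduct_mulVec, star_mulVec, hQH]
  have hdecomp1 : ∀ (Mν : Matrix (Fin N) (Fin N) ℂ) (r : ℝ) (u : Fin N → ℂ),
      (star u ⬝ᵥ (Qm * Mν * Qm + (r : ℂ) • W) *ᵥ u).re
        = (star (Qm *ᵥ u) ⬝ᵥ Mν *ᵥ (Qm *ᵥ u)).re + r * Complex.normSq (star w ⬝ᵥ u) := by
    intro Mν r u
    rw [add_mulVec, dotProduct_add,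
      ← Matrix.mulVec_mulVec, ← Matrix.mulVec_mulVec, hdotQ Mν, Complex.add_re]
    congr 1
    have ha : star u ⬝ᵥ w = star (star w ⬝ᵥ u) := star_dotProduct u w
    rw [smul_mulVec, hWmul, dotProduct_smul, dotProduct_smul, smul_eq_mul, smul_eq_mul,
      ha, Complex.star_def, Complex.mul_conj, Complex.re_ofReal_mul, Complex.ofReal_re]
  have hdecomp2 : ∀ u : Fin N → ℂ,
      (star u ⬝ᵥ u).re = (star (Qm *ᵥ u) ⬝ᵥ (Qm *ᵥ u)).re + Complex.normSq (star w ⬝ᵥ u) := by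
    intro u
    have h1 : star (Qm *ᵥ u) ⬝ᵥ (Qm *ᵥ u)
        = star u ⬝ᵥ u - star (star w ⬝ᵥ u) * (star w ⬝ᵥ u) := by
      rw [hQv u, star_sub, star_smul, sub_dotProduct, dotProduct_sub, dotProduct_sub,
        dotProduct_smul, dotProduct_smul, smul_dotProduct, smul_dotProduct, hw1,
        star_dotProduct u w]
      simp only [smul_eq_mul]
      ring
    have h2 := congrArg Complex.re h1
    rw [Complex.sub_re] at h2
    have hnsq : (star (star w ⬝ᵥ u) * (star w ⬝ᵥ u)).re = Complex.normSq (star w ⬝ᵥ u) := by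
      rw [Complex.star_def, mul_comm, Complex.mul_conj, Complex.ofReal_re]
    rw [hnsq] at h2
    linarith
  -- ### Step 6: linearity of the quadratic form in the θ's.
  have hlin : ∀ (ν : Fin P → ℝ) (z : Fin N → ℂ),
      (star z ⬝ᵥ (∑ q, (θ q ν : ℂ) • A q) *ᵥ z).re
        = ∑ q, θ q ν * (star z ⬝ᵥ A q *ᵥ z).re := by
    intro ν z
    rw [SCMAux.sum_mulVec]
    rw [dotProduct_sum', Complex.re_sum]
    refine Finset.sum_congr rfl fun q _ => ?_
    rw [smul_mulVec, dotProduct_smul, smul_eq_mul, Complex.re_ofReal_mul]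
  -- ### Step 7: the SCM feasibility bound at μt.
  have S1 : ∀ z : Fin N → ℂ,
      lamLB * (star z ⬝ᵥ z).re ≤ (star z ⬝ᵥ (∑ q, (θ q μt : ℂ) • A q) *ᵥ z).re := by
    intro z
    rcases eq_or_lt_of_le (dot_re_nonneg z) with h0 | hpos
    · have hz : z = 0 := dot_re_eq_zero h0.symm
      subst hz
      simp
    · set s := (star z ⬝ᵥ z).re with hs
      set zq : Fin Q → ℝ := fun q => (star z ⬝ᵥ A q *ᵥ z).re / s with hzq
      have hdiv : ∀ ν : Fin P → ℝ, ∑ q, θ q ν * zq q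
          = (star z ⬝ᵥ (∑ q, (θ q ν : ℂ) • A q) *ᵥ z).re / s := by
        intro ν
        rw [hlin, Finset.sum_div]
        exact Finset.sum_congr rfl fun q _ => (mul_div_assoc _ _ _).symm
      have hmem : (∑ q, θ q μt * zq q) ∈ {r : ℝ | ∃ z' : Fin Q → ℝ,
          (∀ q, lamMin (A q) ≤ z' q ∧ z' q ≤ lamMax (A q)) ∧
          (∀ i : Fin J, ∑ q, θ q (μs i) * z' q ≥ lamMin (∑ q, (θ q (μs i) : ℂ) • A q)) ∧
          (∑ q, θ q μt * zq q) = ∑ q, θ q μt * z' q} := by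
        refine ⟨zq, fun q => ⟨?_, ?_⟩, fun i => ?_, rfl⟩
        · rw [hzq, le_div_iff₀ hpos]
          exact lamMin_le_rayleigh (hA q) z
        · rw [hzq, div_le_iff₀ hpos]
          exact rayleigh_le_lamMax (hA q) z
        · rw [hdiv, ge_iff_le, le_div_iff₀ hpos]
          exact lamMin_le_rayleigh (hHerm (μs i)) z
      have hle := hymin.2 hmem
      rw [hdiv, le_div_iff₀ hpos] at hle
      linarith
  -- ### Step 8: conclusion.
  refine ⟨Abar, hAbarH, ?_, ?_⟩
  · apply lamMin_eq_of (hMbarH μt) hN lamLB w hw1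
    · rw [hsum μt, add_mulVec, ← Matrix.mulVec_mulVec, ← Matrix.mulVec_mulVec, hQw,
        mulVec_zero, mulVec_zero, zero_add, smul_mulVec, hWmul, hw1, one_smul,
        ← hlamLB]
    · intro u
      rw [hsum μt, hdecomp1, hdecomp2 u, mul_add, ← hlamLB]
      have h2 := S1 (Qm *ᵥ u)
      linarith
  · intro i
    apply lamMin_eq_of (hMbarH (μs i)) hN (lamMin (∑ q, (θ q (μs i) : ℂ) • A q)) (v i) (hv1 i)
    · rw [hsum (μs i), add_mulVec, ← Matrix.mulVec_mulVec, ← Matrix.mulVec_mulVec, hQvi i,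
        hv i, mulVec_smul, hQvi i, smul_mulVec, hWmul, hwv' i, zero_smul, smul_zero,
        add_zero]
    · intro u
      rw [hsum (μs i), hdecomp1, hdecomp2 u, mul_add]
      have h2 := lamMin_le_rayleigh (hHerm (μs i)) (Qm *ᵥ u)
      have h3 : lamMin (∑ q, (θ q (μs i) : ℂ) • A q) * Complex.normSq (star w ⬝ᵥ u)
          ≤ (∑ q, θ q (μs i) * y q) * Complex.normSq (star w ⬝ᵥ u) :=
        mul_le_mul_of_nonneg_right (hycon i) (Complex.normSq_nonneg _)
      linarith
end

section
/- (Monotonicity of the lower-bound function) Fix ρ ≥ 0 and λ ∈ ℝ and define f : ℝ → ℝ by f(η) = min(λ, η) − 2ρ² / (|λ − η| + sqrt((λ − η)² + 4ρ²)). Then f is continuous and monotonically increasing on ℝ. -/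
open Matrix

/-- Lemma 3.1: for `ρ ≥ 0` and `λ ∈ ℝ`, the function
`f(η) = min(λ,η) − 2ρ²/(|λ−η| + √((λ−η)² + 4ρ²))` is continuous and monotonically
increasing. -/
theorem lower_bound_function_monotone (ρ lam : ℝ) (hρ : 0 ≤ ρ)
    (f : ℝ → ℝ)
    (hf : ∀ η, f η = min lam η
        - 2 * ρ ^ 2 / (|lam - η| + Real.sqrt ((lam - η) ^ 2 + 4 * ρ ^ 2))) :
    Continuous f ∧ Monotone f := by
  have key : ∀ η, f η = (lam + η - Real.sqrt ((lam - η) ^ 2 + 4 * ρ ^ 2)) / 2 := by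
    intro η
    rw [hf]
    set d := lam - η with hd
    set s := Real.sqrt (d ^ 2 + 4 * ρ ^ 2) with hs
    have hs2 : s ^ 2 = d ^ 2 + 4 * ρ ^ 2 := Real.sq_sqrt (by positivity)
    have hsd : |d| ≤ s := by
      rw [← Real.sqrt_sq_eq_abs]
      exact Real.sqrt_le_sqrt (by nlinarith)
    have hmin : min lam η = (lam + η - |d|) / 2 := by
      rcases le_total lam η with h | h
      · rw [min_eq_left h, hd, abs_of_nonpos (by linarith)]; ring
      · rw [min_eq_right h, hd, abs_of_nonneg (by linarith)]; ring
    rcases eq_or_lt_of_le (by positivity : (0:ℝ) ≤ |d| + s) with h0 | h0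
    · have h1 : |d| = 0 := le_antisymm (by nlinarith [Real.sqrt_nonneg (d ^ 2 + 4 * ρ ^ 2), abs_nonneg d]) (abs_nonneg d)
      have h2 : s = 0 := by nlinarith [abs_nonneg d]
      rw [← h0, div_zero, hmin, h1, h2]; ring
    · have h3 : 2 * ρ ^ 2 / (|d| + s) = (s - |d|) / 2 := by
        rw [div_eq_div_iff h0.ne' two_ne_zero]
        nlinarith [sq_abs d]
      rw [h3, hmin]; ring
  constructor
  · have : f = fun η => (lam + η - Real.sqrt ((lam - η) ^ 2 + 4 * ρ ^ 2)) / 2 :=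
      funext key
    rw [this]
    fun_prop
  · intro a b hab
    rw [key a, key b]
    have hA : (0:ℝ) ≤ (lam - a) ^ 2 + 4 * ρ ^ 2 := by positivity
    have h1 : Real.sqrt ((lam - b) ^ 2 + 4 * ρ ^ 2)
        ≤ Real.sqrt ((lam - a) ^ 2 + 4 * ρ ^ 2) + (b - a) := by
      have hnn : 0 ≤ Real.sqrt ((lam - a) ^ 2 + 4 * ρ ^ 2) + (b - a) := by
        have := Real.sqrt_le_sqrt (show (lam - a) ^ 2 ≤ (lam - a) ^ 2 + 4 * ρ ^ 2 by nlinarith)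
        rw [Real.sqrt_sq_eq_abs] at this
        have := neg_abs_le (lam - a)
        nlinarith [Real.sqrt_nonneg ((lam - a) ^ 2 + 4 * ρ ^ 2), abs_nonneg (lam - a)]
      rw [show Real.sqrt ((lam - a) ^ 2 + 4 * ρ ^ 2) + (b - a)
          = Real.sqrt ((Real.sqrt ((lam - a) ^ 2 + 4 * ρ ^ 2) + (b - a)) ^ 2) from
          (Real.sqrt_sq hnn).symm]
      apply Real.sqrt_le_sqrt
      have hsq : Real.sqrt ((lam - a) ^ 2 + 4 * ρ ^ 2) ^ 2 = (lam - a) ^ 2 + 4 * ρ ^ 2 :=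
        Real.sq_sqrt hA
      have habs : -(lam - a) ≤ Real.sqrt ((lam - a) ^ 2 + 4 * ρ ^ 2) := by
        have := Real.sqrt_le_sqrt (show (lam - a) ^ 2 ≤ (lam - a) ^ 2 + 4 * ρ ^ 2 by nlinarith)
        rw [Real.sqrt_sq_eq_abs] at this
        have := neg_abs_le (lam - a)
        linarith
      nlinarith [sub_nonneg.mpr hab]
    linarith
end

section
/- (Exponential convergence of Ritz lower/upper bounds, simplified form) Let A(μ) be Hermitian, μ ∈ [−1,1], and suppose the subspace 𝒱 satisfies min_{ṽ ∈ 𝒱, ‖ṽ‖=1} ‖ṽ − v(μ)‖₂ ≤ ε for the unit eigenvector v(μ) of λ_min(A(μ)). Then the smallest Ritz value λ_SUB of A(μ) with respect to 𝒱 satisfies λ_min(A(μ)) ≤ λ_SUB ≤ λ_min(A(μ)) + C ε² where C depends only on ‖A(μ)‖₂ and the spectral gap; in particular if the distance decays like R^(−J) for R > 1 then λ_SUB − λ_min(A(μ)) ≤ C_U R^(−2J). -/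
open Matrix

lemma lamMin_eq_s15 {n : ℕ} {A : Matrix (Fin n) (Fin n) ℂ} (hA : A.IsHermitian) :
    lamMin A = ⨅ i, hA.eigenvalues i := dif_pos hA

lemma lamMax_eq {n : ℕ} {A : Matrix (Fin n) (Fin n) ℂ} (hA : A.IsHermitian) :
    lamMax A = ⨆ i, hA.eigenvalues i := dif_pos hA

lemma lamMin_le_s15 {n : ℕ} {A : Matrix (Fin n) (Fin n) ℂ} (hA : A.IsHermitian) (i : Fin n) :
    lamMin A ≤ hA.eigenvalues i := by
  rw [lamMin_eq_s15 hA]; exact ciInf_le (Set.Finite.bddBelow (Set.finite_range _)) i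

lemma le_lamMax {n : ℕ} {A : Matrix (Fin n) (Fin n) ℂ} (hA : A.IsHermitian) (i : Fin n) :
    hA.eigenvalues i ≤ lamMax A := by
  rw [lamMax_eq hA]; exact le_ciSup (Set.Finite.bddAbove (Set.finite_range _)) i

/-- Rayleigh bounds: λmin ‖x‖² ≤ Re(x*Ax) ≤ λmax ‖x‖². -/
lemma rayleigh_bounds {n : ℕ} {A : Matrix (Fin n) (Fin n) ℂ} (hA : A.IsHermitian)
    (x : Fin n → ℂ) :
    lamMin A * (star x ⬝ᵥ x).re ≤ (star x ⬝ᵥ A *ᵥ x).re ∧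
      (star x ⬝ᵥ A *ᵥ x).re ≤ lamMax A * (star x ⬝ᵥ x).re := by
  set U : Matrix (Fin n) (Fin n) ℂ := ↑hA.eigenvectorUnitary with hU
  set y : Fin n → ℂ := star U *ᵥ x with hy
  have hsy : star y = star x ᵥ* U := by
    rw [hy, star_mulVec, Matrix.star_eq_conjTranspose, conjTranspose_conjTranspose]
  have hUU : U * star U = 1 := Matrix.mem_unitaryGroup_iff.mp hA.eigenvectorUnitary.2
  have hxx : star x ⬝ᵥ x = star y ⬝ᵥ y := by
    rw [hsy, hy, ← dotProduct_mulVec, mulVec_mulVec, hUU, one_mulVec]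
  have hxA : star x ⬝ᵥ A *ᵥ x
      = star y ⬝ᵥ (diagonal (RCLike.ofReal ∘ hA.eigenvalues)) *ᵥ y := by
    conv_lhs => rw [hA.spectral_theorem, Unitary.conjStarAlgAut_apply]
    rw [hsy, ← mulVec_mulVec, ← mulVec_mulVec, dotProduct_mulVec, hy]
  have hdiag : (star y ⬝ᵥ (diagonal (RCLike.ofReal ∘ hA.eigenvalues)) *ᵥ y).re
      = ∑ i, hA.eigenvalues i * Complex.normSq (y i) := by
    have hcast : ∀ r : ℝ, (RCLike.ofReal (K := ℂ) r).re = r := fun r => rfl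
    rw [dotProduct, Complex.re_sum]
    refine Finset.sum_congr rfl fun i _ => ?_
    simp only [hcast, mulVec_diagonal, Function.comp_apply, Pi.star_apply, RCLike.star_def,
      Complex.mul_re, Complex.mul_im, Complex.conj_re, Complex.conj_im, Complex.normSq_apply,
      Complex.ofReal_re, Complex.ofReal_im]
    ring
  have hyy : (star y ⬝ᵥ y).re = ∑ i, Complex.normSq (y i) := by
    rw [dotProduct, Complex.re_sum]
    refine Finset.sum_congr rfl fun i _ => ?_
    simp [Complex.normSq_apply, Complex.mul_re, Pi.star_apply, Complex.conj_re, Complex.conj_im]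
  rw [hxx, hxA, hdiag, hyy]
  constructor
  · rw [Finset.mul_sum]
    exact Finset.sum_le_sum fun i _ =>
      mul_le_mul_of_nonneg_right (lamMin_le_s15 hA i) (Complex.normSq_nonneg _)
  · rw [Finset.mul_sum]
    exact Finset.sum_le_sum fun i _ =>
      mul_le_mul_of_nonneg_right (le_lamMax hA i) (Complex.normSq_nonneg _)

lemma lamMin_attained {n : ℕ} (hn : 0 < n) {B : Matrix (Fin n) (Fin n) ℂ}
    (hB : B.IsHermitian) :
    ∃ w : Fin n → ℂ, star w ⬝ᵥ w = 1 ∧ (star w ⬝ᵥ B *ᵥ w).re = lamMin B := by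
  have : Nonempty (Fin n) := ⟨⟨0, hn⟩⟩
  obtain ⟨i, hi⟩ := Finite.exists_min hB.eigenvalues
  have hmin : lamMin B = hB.eigenvalues i :=
    le_antisymm (lamMin_le_s15 hB i) (by rw [lamMin_eq_s15 hB]; exact le_ciInf hi)
  refine ⟨⇑(hB.eigenvectorBasis i), ?_, ?_⟩
  · have h1 : (inner ℂ (hB.eigenvectorBasis i) (hB.eigenvectorBasis i) : ℂ) = 1 := by
      have := orthonormal_iff_ite.mp hB.eigenvectorBasis.orthonormal i i
      simpa using this
    rw [EuclideanSpace.inner_eq_star_dotProduct] at h1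
    rw [dotProduct_comm] at h1
    exact h1
  · rw [hmin, hB.eigenvalues_eq i]
    rfl

/-- quadratic accuracy of the smallest Ritz value: for a Hermitian `A`
there is a constant `C ≥ 0` (depending only on `A`) such that whenever a subspace with
orthonormal basis `V` contains a unit vector within distance `ε` of the unit eigenvector
`v` for `λ_min(A)`, the smallest Ritz value `λ_SUB = λ_min(V*AV)` satisfies
`λ_min(A) ≤ λ_SUB ≤ λ_min(A) + C ε²`; in particular a distance `R^(−J)` yields an error
of order `R^(−2J)`. -/
theorem ritz_value_quadratic_accuracy
    {N : ℕ} (A : Matrix (Fin N) (Fin N) ℂ) (hA : A.IsHermitian)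
    (v : Fin N → ℂ) (hv1 : star v ⬝ᵥ v = 1)
    (hv : A *ᵥ v = (lamMin A : ℂ) • v) :
    ∃ C : ℝ, 0 ≤ C ∧
      ∀ (k : ℕ) (V : Matrix (Fin N) (Fin k) ℂ) (ε : ℝ), 0 ≤ ε → Vᴴ * V = 1 →
        (∃ w : Fin k → ℂ, star (V *ᵥ w) ⬝ᵥ (V *ᵥ w) = 1 ∧
          Real.sqrt ((star (V *ᵥ w - v) ⬝ᵥ (V *ᵥ w - v)).re) ≤ ε) →
        lamMin A ≤ lamMin (Vᴴ * A * V) ∧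
        lamMin (Vᴴ * A * V) ≤ lamMin A + C * ε ^ 2 := by
  refine ⟨|lamMin A| + |lamMax A|, by positivity, ?_⟩
  intro k V ε hε hVV hex
  obtain ⟨w, hu1, hdist⟩ := hex
  have hB : (Vᴴ * A * V).IsHermitian := Matrix.isHermitian_conjTranspose_mul_mul V hA
  have key : ∀ z : Fin k → ℂ,
      star z ⬝ᵥ (Vᴴ * A * V) *ᵥ z = star (V *ᵥ z) ⬝ᵥ A *ᵥ (V *ᵥ z) := by
    intro z
    rw [star_mulVec, mulVec_mulVec, ← dotProduct_mulVec, mulVec_mulVec, Matrix.mul_assoc]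
  have key2 : ∀ z : Fin k → ℂ, star (V *ᵥ z) ⬝ᵥ (V *ᵥ z) = star z ⬝ᵥ z := by
    intro z
    rw [star_mulVec, ← dotProduct_mulVec, mulVec_mulVec, hVV, one_mulVec]
  have hk : 0 < k := by
    rcases Nat.eq_zero_or_pos k with h | h
    · subst h
      have h0 : V *ᵥ w = 0 := by
        funext i; simp [Matrix.mulVec, dotProduct]
      rw [h0] at hu1
      simp at hu1
    · exact h
  obtain ⟨b, hb1, hbB⟩ := lamMin_attained hk hB
  -- abbreviations
  set u : Fin N → ℂ := V *ᵥ w with hu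
  set e : Fin N → ℂ := u - v with he
  have huev : u = e + v := by rw [he]; ring
  -- lower bound
  have hlow : lamMin A ≤ lamMin (Vᴴ * A * V) := by
    have h1 := (rayleigh_bounds hA (V *ᵥ b)).1
    rw [key2 b, hb1, ← key b, hbB] at h1
    simpa using h1
  refine ⟨hlow, ?_⟩
  -- upper bound
  have hw1 : star w ⬝ᵥ w = 1 := by rw [← key2 w]; exact hu1
  have h2 := (rayleigh_bounds hB w).1
  rw [hw1, key w] at h2
  simp only [Complex.one_re, mul_one] at h2
  -- h2 : lamMin (Vᴴ*A*V) ≤ (star u ⬝ᵥ A *ᵥ u).re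
  have hT3 : star v ⬝ᵥ A *ᵥ e = star ((lamMin A : ℂ) * (star e ⬝ᵥ v)) := by
    rw [star_dotProduct, star_mulVec, hA.eq, ← dotProduct_mulVec, hv, dotProduct_smul,
      smul_eq_mul]
  have hexp : star u ⬝ᵥ A *ᵥ u
      = star e ⬝ᵥ A *ᵥ e + (lamMin A : ℂ) * (star e ⬝ᵥ v)
        + star ((lamMin A : ℂ) * (star e ⬝ᵥ v)) + (lamMin A : ℂ) := by
    conv_lhs => rw [huev]
    rw [star_add, add_dotProduct, mulVec_add, dotProduct_add, dotProduct_add, hv,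
      dotProduct_smul, dotProduct_smul, hv1, ← hT3, smul_eq_mul, smul_eq_mul, mul_one]
    ring
  have hve : star v ⬝ᵥ e = star (star e ⬝ᵥ v) := star_dotProduct _ _
  have hnorm0 : star u ⬝ᵥ u = star e ⬝ᵥ e + star e ⬝ᵥ v + star v ⬝ᵥ e + star v ⬝ᵥ v := by
    conv_lhs => rw [huev]
    rw [star_add, add_dotProduct, dotProduct_add, dotProduct_add]
    ring
  have hnorm : star e ⬝ᵥ e + star e ⬝ᵥ v + star (star e ⬝ᵥ v) + 1 = 1 := by
    rw [← hve, ← hv1, ← hnorm0, hu1, hv1]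
  set s : ℝ := (star e ⬝ᵥ e).re with hs
  set c : ℂ := star e ⬝ᵥ v with hc
  have hcre : s + 2 * c.re = 0 := by
    have := congrArg Complex.re hnorm
    simp only [Complex.add_re, Complex.one_re] at this
    have hstar : (star c).re = c.re := by simp [Complex.conj_re]
    rw [hstar] at this
    linarith
  have hs0 : 0 ≤ s := by
    rw [hs, dotProduct, Complex.re_sum]
    apply Finset.sum_nonneg
    intro i _
    simp only [Pi.star_apply, RCLike.star_def, Complex.mul_re, Complex.conj_re, Complex.conj_im]
    nlinarith [sq_nonneg (e i).re, sq_nonneg (e i).im]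
  have hsε : s ≤ ε ^ 2 := by
    have h1 : Real.sqrt s ≤ ε := hdist
    have := Real.sq_sqrt hs0
    nlinarith [Real.sqrt_nonneg s]
  have hT4 : (star e ⬝ᵥ A *ᵥ e).re ≤ lamMax A * s := by
    have := (rayleigh_bounds hA e).2
    rwa [← hs] at this
  have hure : (star u ⬝ᵥ A *ᵥ u).re
      = (star e ⬝ᵥ A *ᵥ e).re + 2 * (lamMin A * c.re) + lamMin A := by
    rw [hexp]
    simp only [Complex.add_re, Complex.conj_re, Complex.ofReal_re, ← hc]
    have hmul : ((lamMin A : ℂ) * c).re = lamMin A * c.re := by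
      simp [Complex.mul_re]
    rw [hmul, (by simp [Complex.conj_re, hmul] : (star ((lamMin A : ℂ) * c)).re = lamMin A * c.re)]
    ring
  have habs1 : lamMax A ≤ |lamMax A| := le_abs_self _
  have habs2 : -|lamMin A| ≤ lamMin A := neg_abs_le _
  nlinarith [h2, abs_nonneg (lamMin A), abs_nonneg (lamMax A),
    mul_le_mul_of_nonneg_right habs1 hs0,
    mul_le_mul_of_nonneg_left hsε (abs_nonneg (lamMin A)),
    mul_le_mul_of_nonneg_left hsε (abs_nonneg (lamMax A))]
end
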